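/- arXiv:1807.05790 — 4 statements merged into one kernel-verified Lean document; each statement's English description precedes it below -/
import Mathlib

section
/- Let D ≥ 1 be a natural number and σ > 0 a real number. Then the integral over the open unit disk in ℂ of (|z|^{2/D − 2} / (π·D)) · log|σ^D·z − 1| with respect to two-dimensional Lebesgue measure equals 0 if σ ≤ 1, and equals D·(log σ + (1/σ² − 1)/2) if σ > 1. -/
open MeasureTheory Real

open Complex Set Metric intervalIntegral

lemma slit_aux {b : ℝ} (hb : b < 1) {z : ℂ} (hz : z ∈ closedBall (0:ℂ) b) :
    (1:ℂ) - z ∈ Complex.slitPlane := by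
  simp only [mem_closedBall, dist_zero_right] at hz
  rw [sub_eq_add_neg]
  exact Complex.mem_slitPlane_of_norm_lt_one (by simpa using hz.trans_lt hb)

lemma circ_log_complex {b : ℝ} (hb0 : 0 < b) (hb : b < 1) :
    ∫ θ in (0:ℝ)..(2*π), Complex.log (1 - circleMap 0 b θ) = 0 := by
  have hcont : ContinuousOn (fun z : ℂ => Complex.log (1 - z)) (closedBall (0:ℂ) b) := by
    intro z hz
    exact ((continuousAt_clog (slit_aux hb hz)).comp
      (by fun_prop)).continuousWithinAt
  have hdiff : ∀ z ∈ ball (0:ℂ) b \ (∅ : Set ℂ), DifferentiableAt ℂ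
      (fun z : ℂ => Complex.log (1 - z)) z := by
    intro z hz
    have := slit_aux hb (ball_subset_closedBall hz.1)
    exact (Complex.differentiableAt_log this).comp z (by fun_prop)
  have key := circleIntegral_div_sub_of_differentiable_on_off_countable
    (countable_empty) (mem_ball_self hb0 : (0:ℂ) ∈ ball 0 b) hcont hdiff
  simp only [sub_zero, Complex.log_one, mul_zero] at key
  -- expand circle integral
  rw [circleIntegral] at key
  simp only [sub_zero, deriv_circleMap, smul_eq_mul] at key
  have h1 : ∀ θ : ℝ, circleMap 0 b θ * Complex.I *
      (Complex.log (1 - circleMap 0 b θ) / circleMap 0 b θ)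
      = Complex.I * Complex.log (1 - circleMap 0 b θ) := by
    intro θ
    have hne : circleMap 0 b θ ≠ 0 := by simpa using circleMap_ne_center (c := (0:ℂ)) hb0.ne' (θ := θ)
    field_simp
  rw [intervalIntegral.integral_congr (fun θ _ => h1 θ)] at key
  rw [intervalIntegral.integral_const_mul] at key
  exact mul_left_cancel₀ Complex.I_ne_zero (by rw [key, mul_zero])

lemma cont_log_abs {b : ℝ} (hb : ∀ θ : ℝ, (b:ℂ) * Complex.exp (θ * Complex.I) - 1 ≠ 0) :
    Continuous fun θ : ℝ => Real.log (‖(b:ℂ) * Complex.exp (θ * Complex.I) - 1‖) := by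
  have h1 : Continuous fun θ : ℝ => (b:ℂ) * Complex.exp (θ * Complex.I) - 1 := by fun_prop
  exact (continuous_norm.comp h1).log fun θ => norm_ne_zero_iff.mpr (hb θ)

-- real mean value, subcritical
lemma circ_lt {b : ℝ} (hb0 : 0 ≤ b) (hb : b < 1) :
    ∫ θ in Ioo (-π) π, Real.log (‖(b:ℂ) * Complex.exp (θ * Complex.I) - 1‖) = 0 := by
  set g : ℝ → ℝ := fun θ => Real.log (‖(b:ℂ) * Complex.exp (θ * Complex.I) - 1‖)
    with hg
  have hne : ∀ θ : ℝ, (b:ℂ) * Complex.exp (θ * Complex.I) - 1 ≠ 0 := by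
    intro θ h
    have h1 := congrArg (‖·‖) (sub_eq_zero.mp h)
    simp only [norm_mul, Complex.norm_exp, Complex.norm_real, Real.norm_eq_abs, _root_.abs_of_nonneg hb0,
      norm_one] at h1
    rw [show ((θ:ℂ) * Complex.I).re = 0 by simp, Real.exp_zero, mul_one] at h1
    linarith
  have hgc : Continuous g := cont_log_abs hne
  have hper : Function.Periodic g (2 * π) := by
    intro θ
    simp only [hg]
    congr 2
    push_cast
    rw [add_mul, Complex.exp_add]
    norm_num [Complex.exp_two_pi_mul_I]
  -- value over 0..2π from complex mean value
  have hval : ∫ θ in (0:ℝ)..(2*π), g θ = 0 := by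
    rcases eq_or_lt_of_le hb0 with hb0' | hb0'
    · have : g = fun _ => 0 := by
        funext θ; simp [hg, ← hb0']
      simp [this]
    · have hc := circ_log_complex hb0' hb
      have hcont2 : Continuous fun θ : ℝ => Complex.log (1 - circleMap 0 b θ) := by
        refine continuous_iff_continuousAt.2 fun θ => ?_
        refine (continuousAt_clog ?_).comp (by fun_prop)
        rw [sub_eq_add_neg]
        refine Complex.mem_slitPlane_of_norm_lt_one ?_
        simpa [circleMap, _root_.abs_of_nonneg hb0] using hb
      have h2 : (∫ θ in (0:ℝ)..(2*π), Complex.log (1 - circleMap 0 b θ)).re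
          = ∫ θ in (0:ℝ)..(2*π), (Complex.log (1 - circleMap 0 b θ)).re := by
        rw [intervalIntegral.integral_of_le (by positivity),
          intervalIntegral.integral_of_le (by positivity)]
        exact (integral_re (hcont2.integrableOn_Ioc)).symm
      rw [hc] at h2
      have h3 : ∀ θ : ℝ, (Complex.log (1 - circleMap 0 b θ)).re = g θ := by
        intro θ
        rw [Complex.log_re, hg]
        simp only
        rw [norm_sub_rev]
        congr 2
        simp [circleMap]
      rw [intervalIntegral.integral_congr (fun θ _ => h3 θ)] at h2
      simpa using h2.symm
  have hshift : ∫ θ in (-π)..(-π + 2*π), g θ = ∫ θ in (0:ℝ)..(0 + 2*π), g θ :=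
    hper.intervalIntegral_add_eq (-π) 0
  have hpi : -π + 2*π = π := by ring
  rw [hpi, zero_add] at hshift
  rw [← MeasureTheory.integral_Ioc_eq_integral_Ioo,
    ← intervalIntegral.integral_of_le (by linarith [Real.pi_pos] : -π ≤ π), hshift, hval]

lemma ne_zero_of_abs_ne_one {b : ℝ} (hb0 : 0 ≤ b) (hb : b ≠ 1) (θ : ℝ) :
    (b:ℂ) * Complex.exp (θ * Complex.I) - 1 ≠ 0 := by
  intro h
  have h1 := congrArg (‖·‖) (sub_eq_zero.mp h)
  simp only [norm_mul, Complex.norm_exp, Complex.norm_real, Real.norm_eq_abs, _root_.abs_of_nonneg hb0,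
    norm_one] at h1
  rw [show ((θ:ℂ) * Complex.I).re = 0 by simp, Real.exp_zero, mul_one] at h1
  exact hb h1

lemma circ_main {c : ℝ} (hc0 : 0 < c) (hc : c ≠ 1) :
    ∫ θ in Ioo (-π) π, Real.log (‖(c:ℂ) * Complex.exp (θ * Complex.I) - 1‖)
      = 2 * π * max (Real.log c) 0 := by
  rcases lt_or_gt_of_ne hc with h1 | h1
  · rw [circ_lt hc0.le h1, max_eq_right (Real.log_nonpos hc0.le h1.le), mul_zero]
  · -- c > 1
    have hcne : (c:ℂ) ≠ 0 := by exact_mod_cast hc0.ne'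
    have hinv0 : (0:ℝ) ≤ 1/c := by positivity
    have hinv1 : 1/c < 1 := by rw [div_lt_one hc0]; exact h1
    have hpt : ∀ θ : ℝ, Real.log (‖(c:ℂ) * Complex.exp (θ * Complex.I) - 1‖)
        = Real.log c + Real.log (‖((1/c : ℝ):ℂ) * Complex.exp (θ * Complex.I) - 1‖) := by
      intro θ
      have hexpne : Complex.exp (θ * Complex.I) ≠ 0 := Complex.exp_ne_zero _
      have e1 : (c:ℂ) * Complex.exp (θ * Complex.I) - 1
          = ((c:ℂ) * Complex.exp (θ * Complex.I)) *
            (-((starRingEnd ℂ) (((1/c : ℝ):ℂ) * Complex.exp (θ * Complex.I) - 1))) := by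
        rw [map_sub, map_mul, map_one, Complex.conj_ofReal, ← Complex.exp_conj]
        rw [show (starRingEnd ℂ) ((θ:ℂ) * Complex.I) = -((θ:ℂ) * Complex.I) by
          simp [Complex.conj_ofReal]]
        rw [Complex.exp_neg]
        field_simp
        rw [Complex.ofReal_div, Complex.ofReal_one, mul_sub, mul_one_div_cancel hcne]
        ring
      rw [e1]
      simp only [norm_mul, norm_neg, Complex.norm_conj, Complex.norm_real, Real.norm_eq_abs,
        Complex.norm_exp, _root_.abs_of_nonneg hc0.le]
      rw [show ((θ:ℂ) * Complex.I).re = 0 by simp, Real.exp_zero, mul_one]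
      rw [Real.log_mul hc0.ne' (norm_ne_zero_iff.mpr
        (ne_zero_of_abs_ne_one hinv0 hinv1.ne θ))]
    rw [MeasureTheory.setIntegral_congr_fun measurableSet_Ioo (fun θ _ => hpt θ)]
    have hint : IntegrableOn
        (fun θ : ℝ => Real.log (‖((1/c : ℝ):ℂ) * Complex.exp (θ * Complex.I) - 1‖))
        (Ioo (-π) π) :=
      ((cont_log_abs (ne_zero_of_abs_ne_one hinv0 hinv1.ne)).continuousOn).integrableOn_compact
        isCompact_Icc |>.mono_set Ioo_subset_Icc_self
    rw [MeasureTheory.integral_add (integrableOn_const (C := Real.log c) (s := Ioo (-π) π) (μ := volume) (by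
      rw [Real.volume_Ioo]; exact ENNReal.ofReal_ne_top)) hint]
    rw [circ_lt hinv0 hinv1, add_zero, MeasureTheory.setIntegral_const]
    rw [measureReal_def, Real.volume_Ioo, max_eq_left (Real.log_nonneg h1.le)]
    rw [ENNReal.toReal_ofReal (by linarith [Real.pi_pos]), smul_eq_mul]
    ring

lemma radial {α a : ℝ} (hα : 0 < α) (ha : 1 < a) :
    ∫ r in Ioo (0:ℝ) 1, r ^ (α - 1) * max (Real.log (a * r)) 0
      = Real.log a / α - (1 - a ^ (-α)) / α ^ 2 := by
  have ha0 : 0 < a := by linarith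
  have hia : 0 < 1/a := by positivity
  have hia1 : 1/a < 1 := by rw [div_lt_one ha0]; exact ha
  have hcong : ∀ r ∈ Ioo (0:ℝ) 1, r ^ (α - 1) * max (Real.log (a * r)) 0
      = (Ioo (1/a) 1).indicator (fun r => r ^ (α - 1) * Real.log (a * r)) r := by
    intro r hr
    rcases le_or_gt r (1/a) with h | h
    · have h2 : a * r ≤ 1 := by
        rw [← le_div_iff₀' ha0]; exact h
      rw [Set.indicator_of_notMem (fun hm => (Set.mem_Ioo.mp hm).1.not_ge h),
        max_eq_right (Real.log_nonpos (mul_nonneg ha0.le hr.1.le) h2), mul_zero]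
    · have h2 : 1 < a * r := by
        rw [← div_lt_iff₀' ha0]; exact h
      rw [Set.indicator_of_mem (Set.mem_Ioo.mpr ⟨h, hr.2⟩),
        max_eq_left (Real.log_nonneg h2.le)]
  rw [MeasureTheory.setIntegral_congr_fun measurableSet_Ioo hcong,
    MeasureTheory.setIntegral_indicator measurableSet_Ioo]
  rw [show Ioo (0:ℝ) 1 ∩ Ioo (1/a) 1 = Ioo (1/a) 1 by
    rw [Set.inter_eq_right]; exact Ioo_subset_Ioo hia.le le_rfl]
  rw [← MeasureTheory.integral_Ioc_eq_integral_Ioo,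
    ← intervalIntegral.integral_of_le hia1.le]
  -- FTC
  set F : ℝ → ℝ := fun r => r ^ α / α * Real.log (a * r) - r ^ α / α ^ 2 with hF
  have hderiv : ∀ r ∈ Set.uIcc (1/a) 1, HasDerivAt F (r ^ (α - 1) * Real.log (a * r)) r := by
    intro r hr
    rw [Set.uIcc_of_le hia1.le] at hr
    have hr0 : 0 < r := lt_of_lt_of_le hia hr.1
    have h1 : HasDerivAt (fun r : ℝ => r ^ α) (α * r ^ (α - 1)) r :=
      Real.hasDerivAt_rpow_const (Or.inl hr0.ne')
    have h2 : HasDerivAt (fun r : ℝ => Real.log (a * r)) (1/r) r := by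
      have := (Real.hasDerivAt_log (by positivity : a * r ≠ 0)).comp r
        ((hasDerivAt_id r).const_mul a)
      convert this using 1
      · rfl
      · rfl
      · rfl
      field_simp
    have h3 : HasDerivAt F (α * r ^ (α - 1) / α * Real.log (a * r) + r ^ α / α * (1/r)
        - α * r ^ (α - 1) / α ^ 2) r := ((h1.div_const α).mul h2).sub (h1.div_const (α^2))
    convert h3 using 1
    have hra : r ^ α = r ^ (α - 1) * r := by
      rw [← Real.rpow_add_one hr0.ne', sub_add_cancel]
    rw [hra]
    field_simp
    ring
  have hcont : ContinuousOn (fun r : ℝ => r ^ (α - 1) * Real.log (a * r))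
      (Set.uIcc (1/a) 1) := by
    rw [Set.uIcc_of_le hia1.le]
    intro r hr
    have hr0 : 0 < r := lt_of_lt_of_le hia hr.1
    exact (((Real.continuousAt_rpow_const r _ (Or.inl hr0.ne')).mul
      ((Real.continuousAt_log (by positivity)).comp
        ((continuousAt_id.const_mul a)))).continuousWithinAt)
  rw [intervalIntegral.integral_eq_sub_of_hasDerivAt hderiv
    (hcont.intervalIntegrable)]
  have h1a : (1:ℝ)/a * a = 1 := by field_simp
  have hpow : ((1:ℝ)/a) ^ α = a ^ (-α) := by
    rw [Real.rpow_neg ha0.le, one_div, Real.inv_rpow ha0.le]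
  simp only [hF, Real.one_rpow, mul_one]
  rw [show a * (1/a) = 1 by field_simp, Real.log_one, mul_zero, hpow]
  ring

lemma integrable_circ {b : ℝ} (hb0 : 0 ≤ b) (hb1 : b ≠ 1) :
    IntegrableOn (fun θ : ℝ => Real.log (‖(b:ℂ) * Complex.exp (θ * Complex.I) - 1‖))
      (Ioo (-π) π) := by
  exact ((cont_log_abs (ne_zero_of_abs_ne_one hb0 hb1)).continuousOn.integrableOn_compact
    isCompact_Icc).mono_set Ioo_subset_Icc_self

lemma abs_log_bound {b B : ℝ} (hb0 : 0 < b) (hb1 : b ≠ 1) (hbB : b ≤ B) :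
    ∫ θ in Ioo (-π) π, |Real.log (‖(b:ℂ) * Complex.exp (θ * Complex.I) - 1‖)|
      ≤ 4 * π * Real.log (1 + B) := by
  set g : ℝ → ℝ := fun θ => Real.log (‖(b:ℂ) * Complex.exp (θ * Complex.I) - 1‖)
    with hg
  have hgc : Continuous g := cont_log_abs (ne_zero_of_abs_ne_one hb0.le hb1)
  have hgi : IntegrableOn g (Ioo (-π) π) := integrable_circ hb0.le hb1
  have hmi : IntegrableOn (fun θ => max (g θ) 0) (Ioo (-π) π) :=
    ((hgc.max continuous_const).continuousOn.integrableOn_compact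
      isCompact_Icc).mono_set Ioo_subset_Icc_self
  have hpt : ∀ θ : ℝ, |g θ| = 2 * max (g θ) 0 - g θ := by
    intro θ
    rcases le_or_gt 0 (g θ) with h | h
    · rw [_root_.abs_of_nonneg h, max_eq_left h]; ring
    · rw [_root_.abs_of_neg h, max_eq_right h.le]; ring
  change ∫ θ in Ioo (-π) π, |g θ| ≤ _
  simp only [hpt]
  rw [MeasureTheory.integral_sub ((hmi.const_mul 2)) hgi,
    MeasureTheory.integral_const_mul]
  have h1 : ∫ θ in Ioo (-π) π, max (g θ) 0 ≤ 2 * π * Real.log (1 + B) := by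
    have hB0 : (0:ℝ) ≤ Real.log (1 + B) := Real.log_nonneg (by linarith)
    calc ∫ θ in Ioo (-π) π, max (g θ) 0
        ≤ ∫ _θ in Ioo (-π) π, Real.log (1 + B) := by
          apply MeasureTheory.setIntegral_mono_on hmi (by
            exact MeasureTheory.integrableOn_const (by
              rw [Real.volume_Ioo]; exact ENNReal.ofReal_ne_top)) measurableSet_Ioo
          intro θ _
          apply max_le _ hB0
          apply Real.log_le_log (norm_pos_iff.mpr (ne_zero_of_abs_ne_one hb0.le hb1 θ))
          calc ‖(b:ℂ) * Complex.exp (θ * Complex.I) - 1‖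
              ≤ ‖(b:ℂ) * Complex.exp (θ * Complex.I)‖ + ‖(1:ℂ)‖ := by
                exact norm_sub_le _ _
            _ ≤ 1 + B := by
                simp only [norm_mul, Complex.norm_real, Real.norm_eq_abs, _root_.abs_of_nonneg hb0.le,
                  Complex.norm_exp, norm_one]
                rw [show ((θ:ℂ) * Complex.I).re = 0 by simp, Real.exp_zero, mul_one]
                linarith
      _ = 2 * π * Real.log (1 + B) := by
          rw [MeasureTheory.setIntegral_const, measureReal_def, Real.volume_Ioo,
            ENNReal.toReal_ofReal (by linarith [Real.pi_pos]), smul_eq_mul]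
          ring
  have h2 : (0:ℝ) ≤ ∫ θ in Ioo (-π) π, g θ := by
    rw [hg, circ_main hb0 hb1]
    positivity
  linarith

set_option maxHeartbeats 1000000 in
lemma disk {α a c0 : ℝ} (hα : 0 < α) (ha0 : 0 < a) :
    ∫ z in Metric.ball (0:ℂ) 1,
        (‖z‖ ^ (α - 2) * c0) * Real.log (‖(a:ℂ) * z - 1‖)
      = (2 * π * c0) * ∫ r in Ioo (0:ℝ) 1, r ^ (α - 1) * max (Real.log (a * r)) 0 := by
  set f : ℂ → ℝ := fun z =>
    (‖z‖ ^ (α - 2) * c0) * Real.log (‖(a:ℂ) * z - 1‖) with hf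
  set H : ℝ × ℝ → ℝ := fun p =>
    (p.1 ^ (α - 1) * c0) *
      Real.log (‖((a * p.1 : ℝ):ℂ) * Complex.exp (p.2 * Complex.I) - 1‖) with hH
  have hHmeas : Measurable H := by
    apply Measurable.mul
    · exact (measurable_fst.pow_const _).mul_const c0
    · apply Real.measurable_log.comp
      apply Continuous.measurable
      exact continuous_norm.comp (by fun_prop)
  -- step 1 : polar coordinates
  have h1 : ∫ z in Metric.ball (0:ℂ) 1, f z
      = ∫ p in polarCoord.target, p.1 • (Metric.ball (0:ℂ) 1).indicator f
          (Complex.polarCoord.symm p) := by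
    rw [← MeasureTheory.integral_indicator measurableSet_ball,
      ← Complex.integral_comp_polarCoord_symm]
  have h2 : ∀ p ∈ polarCoord.target,
      p.1 • (Metric.ball (0:ℂ) 1).indicator f (Complex.polarCoord.symm p)
        = (Ioo (0:ℝ) 1 ×ˢ Ioo (-π) π).indicator H p := by
    rintro ⟨r, θ⟩ hp
    rw [polarCoord_target] at hp
    obtain ⟨hr, hθ⟩ := hp
    simp only [Set.mem_Ioi] at hr
    have habs : ‖Complex.polarCoord.symm (r, θ)‖ = r := by
      rw [Complex.norm_polarCoord_symm, _root_.abs_of_pos hr]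
    have hz : Complex.polarCoord.symm (r, θ) = (r:ℂ) * Complex.exp (θ * Complex.I) := by
      rw [Complex.polarCoord_symm_apply, Complex.exp_mul_I]
      push_cast
      ring
    rcases lt_or_ge r 1 with h | h
    · rw [Set.indicator_of_mem (by rw [mem_ball_zero_iff, habs]; exact h),
        Set.indicator_of_mem (by exact Set.mem_prod.mpr ⟨Set.mem_Ioo.mpr ⟨hr, h⟩, hθ⟩)]
      have hc : ((a * r : ℝ):ℂ) * Complex.exp (θ * Complex.I)
          = (a:ℂ) * ((r:ℂ) * Complex.exp (θ * Complex.I)) := by push_cast; ring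
      have habs' : ‖(r:ℂ) * Complex.exp (θ * Complex.I)‖ = r := by
        rw [← hz, habs]
      simp only [hf, hH, hz, habs', smul_eq_mul, hc]
      rw [show α - 1 = (α - 2) + 1 by ring, Real.rpow_add_one hr.ne']
      ring
    · rw [Set.indicator_of_notMem (by
          rw [mem_ball_zero_iff, habs]; exact h.not_gt),
        Set.indicator_of_notMem (by
          intro hm
          exact ((Set.mem_prod.mp hm).1.2).not_ge h)]
      simp
  rw [h1, MeasureTheory.setIntegral_congr_fun polarCoord.open_target.measurableSet h2,
    MeasureTheory.setIntegral_indicator (measurableSet_Ioo.prod measurableSet_Ioo)]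
  rw [show polarCoord.target ∩ (Ioo (0:ℝ) 1 ×ˢ Ioo (-π) π) = Ioo (0:ℝ) 1 ×ˢ Ioo (-π) π by
    rw [Set.inter_eq_right, polarCoord_target]
    exact Set.prod_mono Ioo_subset_Ioi_self le_rfl]
  -- step 2 : Fubini
  have hres : (volume : Measure (ℝ × ℝ)).restrict (Ioo (0:ℝ) 1 ×ˢ Ioo (-π) π)
      = (volume.restrict (Ioo (0:ℝ) 1)).prod (volume.restrict (Ioo (-π) π)) := by
    rw [MeasureTheory.Measure.volume_eq_prod, MeasureTheory.Measure.prod_restrict]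
  have hae : ∀ᵐ r ∂(volume.restrict (Ioo (0:ℝ) 1)), r ∈ Ioo (0:ℝ) 1 ∧ a * r ≠ 1 := by
    have h3 : ∀ᵐ r ∂(volume : Measure ℝ), a * r ≠ 1 := by
      rw [MeasureTheory.ae_iff]
      refine MeasureTheory.measure_mono_null ?_ (MeasureTheory.measure_singleton (1/a : ℝ))
      intro r hr
      simp only [Set.mem_setOf_eq, not_not] at hr
      simp only [Set.mem_singleton_iff]
      field_simp
      linarith [hr]
    filter_upwards [MeasureTheory.ae_restrict_mem measurableSet_Ioo,
      MeasureTheory.ae_restrict_of_ae h3] with r h4 h5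
    exact ⟨h4, h5⟩
  have hint : Integrable H
      ((volume.restrict (Ioo (0:ℝ) 1)).prod (volume.restrict (Ioo (-π) π))) := by
    rw [MeasureTheory.integrable_prod_iff hHmeas.aestronglyMeasurable]
    constructor
    · filter_upwards [hae] with r hr
      have har0 : 0 < a * r := mul_pos ha0 hr.1.1
      have heq : (fun θ => H (r, θ)) = fun θ : ℝ => (r ^ (α - 1) * c0) *
          Real.log (‖((a * r : ℝ):ℂ) * Complex.exp ((θ:ℂ) * Complex.I) - 1‖) := by
        funext θ; simp only [hH]
      rw [heq]
      exact (integrable_circ har0.le hr.2).const_mul _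
    · apply MeasureTheory.Integrable.mono'
        (g := fun r => (|c0| * (4 * π * Real.log (1 + a))) * r ^ (α - 1))
      · apply Integrable.const_mul
        have := intervalIntegral.intervalIntegrable_rpow' (a := 0) (b := 1)
          (r := α - 1) (by linarith)
        rw [intervalIntegrable_iff_integrableOn_Ioo_of_le (by norm_num)] at this
        exact this
      · exact ((hHmeas.norm).stronglyMeasurable.integral_prod_right').aestronglyMeasurable
      · filter_upwards [hae] with r hr
        have hr0 : 0 < r := hr.1.1
        have har0 : 0 < a * r := mul_pos ha0 hr0
        have hnorm : ∀ θ : ℝ, ‖H (r, θ)‖ = |r ^ (α - 1) * c0| *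
            |Real.log (‖((a * r : ℝ):ℂ) * Complex.exp (θ * Complex.I) - 1‖)| := by
          intro θ
          rw [hH]
          simp only [Real.norm_eq_abs, abs_mul]
        have h6 : ∫ θ in Ioo (-π) π, ‖H (r, θ)‖
            = |r ^ (α - 1) * c0| * ∫ θ in Ioo (-π) π,
              |Real.log (‖((a * r : ℝ):ℂ) * Complex.exp (θ * Complex.I) - 1‖)| := by
          simp only [hnorm]
          rw [MeasureTheory.integral_const_mul]
        rw [Real.norm_eq_abs, _root_.abs_of_nonneg (by
          rw [h6]
          positivity), h6]
        calc |r ^ (α - 1) * c0| * ∫ θ in Ioo (-π) π,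
              |Real.log (‖((a * r : ℝ):ℂ) * Complex.exp (θ * Complex.I) - 1‖)|
            ≤ |r ^ (α - 1) * c0| * (4 * π * Real.log (1 + a)) := by
              apply mul_le_mul_of_nonneg_left _ (abs_nonneg _)
              exact abs_log_bound har0 hr.2 (by nlinarith [hr.1.2])
          _ = (|c0| * (4 * π * Real.log (1 + a))) * r ^ (α - 1) := by
              rw [abs_mul, _root_.abs_of_nonneg (Real.rpow_nonneg hr0.le _)]
              ring
  rw [hres, MeasureTheory.integral_prod _ hint]
  -- step 3 : inner circle integral
  have h7 : ∀ᵐ r ∂(volume.restrict (Ioo (0:ℝ) 1)),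
      (∫ θ in Ioo (-π) π, H (r, θ))
        = (2 * π * c0) * (r ^ (α - 1) * max (Real.log (a * r)) 0) := by
    filter_upwards [hae] with r hr
    have har0 : 0 < a * r := mul_pos ha0 hr.1.1
    have : ∀ θ : ℝ, H (r, θ) = (r ^ (α - 1) * c0) *
        Real.log (‖((a * r : ℝ):ℂ) * Complex.exp (θ * Complex.I) - 1‖) := by
      intro θ; rfl
    simp only [this]
    rw [MeasureTheory.integral_const_mul, circ_main har0 hr.2]
    ring
  rw [MeasureTheory.integral_congr_ae h7, MeasureTheory.integral_const_mul]

theorem stmt7 (D : ℕ) (hD : 1 ≤ D) (σ : ℝ) (hσ : 0 < σ) :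
    (σ ≤ 1 →
      ∫ z in Metric.ball (0 : ℂ) 1,
          (‖z‖ ^ ((2 : ℝ) / D - 2) / (π * D)) *
            Real.log ‖((σ ^ D : ℝ) : ℂ) * z - 1‖ = 0) ∧
    (1 < σ →
      ∫ z in Metric.ball (0 : ℂ) 1,
          (‖z‖ ^ ((2 : ℝ) / D - 2) / (π * D)) *
            Real.log ‖((σ ^ D : ℝ) : ℂ) * z - 1‖ =
        (D : ℝ) * (Real.log σ + (1 / σ ^ 2 - 1) / 2)) := by
  have hD0 : (0:ℝ) < (D:ℝ) := by exact_mod_cast hD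
  have ha0 : (0:ℝ) < σ ^ D := pow_pos hσ D
  have hα : (0:ℝ) < 2 / (D:ℝ) := by positivity
  have key := disk (α := 2 / (D:ℝ)) (a := σ ^ D) (c0 := (π * (D:ℝ))⁻¹) hα ha0
  have hgoal : ∫ z in Metric.ball (0 : ℂ) 1,
      (‖z‖ ^ ((2 : ℝ) / D - 2) / (π * D)) *
        Real.log (‖((σ ^ D : ℝ) : ℂ) * z - 1‖)
      = ∫ z in Metric.ball (0 : ℂ) 1,
        (‖z‖ ^ ((2 : ℝ) / D - 2) * (π * (D:ℝ))⁻¹) *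
          Real.log (‖((σ ^ D : ℝ) : ℂ) * z - 1‖) := by
    apply MeasureTheory.setIntegral_congr_fun measurableSet_ball
    intro z _
    simp only [div_eq_mul_inv]
  constructor
  · intro h1
    have hval : ∫ r in Ioo (0:ℝ) 1, r ^ (2 / (D:ℝ) - 1) * max (Real.log (σ ^ D * r)) 0
        = 0 := by
      rw [MeasureTheory.setIntegral_congr_fun measurableSet_Ioo
        (g := fun _ => (0:ℝ)) (fun r hr => by
          have har : σ ^ D * r ≤ 1 := by
            have h2 : σ ^ D ≤ 1 := pow_le_one₀ hσ.le h1
            nlinarith [hr.1, hr.2]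
          rw [max_eq_right (Real.log_nonpos (by nlinarith [hr.1] : (0:ℝ) ≤ σ ^ D * r) har),
            mul_zero])]
      simp
    rw [hgoal, key, hval, mul_zero]
  · intro h1
    have ha1 : 1 < σ ^ D := one_lt_pow₀ h1 (by omega)
    rw [hgoal, key, radial hα ha1]
    rw [Real.log_pow]
    have hp : (σ ^ D : ℝ) ^ (-(2 / (D:ℝ))) = (σ ^ 2)⁻¹ := by
      rw [← Real.rpow_natCast σ D, ← Real.rpow_mul hσ.le]
      rw [show (D:ℝ) * -(2 / (D:ℝ)) = -2 by field_simp]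
      rw [Real.rpow_neg hσ.le, show ((2:ℝ)) = ((2:ℕ):ℝ) by norm_num, Real.rpow_natCast]
    rw [hp]
    have hπ : π ≠ 0 := Real.pi_ne_zero
    field_simp
    ring
end

section
/- Fix natural numbers N ≥ 1 and D ≥ 1, and let μ be the probability measure on D-tuples (J_1, …, J_D) of real N × N matrices under which all N²·D entries are i.i.d. standard Gaussian random variables (mean 0, variance 1). Then for every real number c, ∫ |det(c·(J_1·J_2·⋯·J_D) − 1_N)| dμ ≥ 1. -/
open MeasureTheory ProbabilityTheory Real

lemma gauss_pow_integrable (k : ℕ) : Integrable (fun x : ℝ => x ^ k) (gaussianReal 0 1) := by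
  rw [gaussianReal_of_var_ne_zero 0 one_ne_zero,
    integrable_withDensity_iff_integrable_smul' (measurable_gaussianPDF 0 1)
      (Filter.Eventually.of_forall fun x => ENNReal.ofReal_lt_top)]
  have h := (integrable_rpow_mul_exp_neg_mul_sq (b := 2⁻¹) (by norm_num)
    (s := (k : ℝ)) (lt_of_lt_of_le (by norm_num) (Nat.cast_nonneg k))).const_mul (√(2 * π))⁻¹
  simp only [rpow_natCast] at h
  have heq : (fun x : ℝ => (gaussianPDF 0 1 x).toReal • x ^ k)
      = fun x : ℝ => (√(2 * π))⁻¹ * (x ^ k * rexp (-2⁻¹ * x ^ 2)) := by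
    ext x
    rw [gaussianPDF, ENNReal.toReal_ofReal (gaussianPDFReal_nonneg _ _ _), smul_eq_mul]
    simp only [gaussianPDFReal, NNReal.coe_one, mul_one, sub_zero]
    ring_nf
  rw [heq]; exact h

lemma gauss_mean : ∫ x, x ∂(gaussianReal 0 1) = 0 := by
  have h : (gaussianReal 0 1).map (fun x : ℝ => -1 * x) = gaussianReal 0 1 := by
    rw [show (fun x : ℝ => -1 * x) = ((-1 : ℝ) * ·) from rfl, gaussianReal_map_const_mul]
    norm_num
  have h2 := integral_map (μ := gaussianReal 0 1) (φ := fun x : ℝ => -1 * x)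
    (f := fun x : ℝ => x) (measurable_id.const_mul (-1)).aemeasurable
    measurable_id.aestronglyMeasurable
  rw [h] at h2
  simp only [neg_one_mul] at h2
  rw [integral_neg] at h2
  linarith

variable {α : Type*} [MeasurableSpace α] (ν : Measure α) [IsProbabilityMeasure ν]

lemma integrable_pi_prod {n : ℕ} (f : Fin n → α → ℝ) (hf : ∀ i, Integrable (f i) ν) :
    Integrable (fun x : Fin n → α => ∏ i, f i (x i)) (Measure.pi fun _ => ν) := by
  induction n with
  | zero => simpa using integrable_const (μ := Measure.pi fun _ : Fin 0 => ν) (1 : ℝ)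
  | succ n ih =>
    have hmp := (measurePreserving_piFinSuccAbove (fun _ : Fin (n + 1) => ν) 0).symm
    rw [← hmp.integrable_comp_emb (MeasurableEquiv.measurableEmbedding _)]
    simp_rw [MeasurableEquiv.piFinSuccAbove_symm_apply, Fin.insertNthEquiv,
      Fin.prod_univ_succ, Fin.insertNth_zero]
    simp only [Fin.zero_succAbove, Function.comp_def, Fin.cons_zero, Fin.cons_succ,
      Equiv.coe_fn_mk]
    exact Integrable.mul_prod (hf 0) (ih _ fun i => hf _)

lemma integral_pi_prod {n : ℕ} (f : Fin n → α → ℝ) :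
    ∫ x : Fin n → α, ∏ i, f i (x i) ∂(Measure.pi fun _ => ν) = ∏ i, ∫ x, f i x ∂ν := by
  induction n with
  | zero => simp
  | succ n ih =>
    rw [← ((measurePreserving_piFinSuccAbove (fun _ : Fin (n + 1) => ν) 0).symm).integral_comp']
    simp_rw [MeasurableEquiv.piFinSuccAbove_symm_apply, Fin.insertNthEquiv,
      Fin.prod_univ_succ, Fin.insertNth_zero]
    simp only [Fin.zero_succAbove, Fin.cons_zero, Fin.cons_succ, Equiv.coe_fn_mk, cast_eq]
    rw [integral_prod_mul (f := f 0) (g := fun y : Fin n → α => ∏ i, f i.succ (y i)), ih]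

lemma pi_eval_integrable {n : ℕ} (l : Fin n) {g : α → ℝ} (hg : Integrable g ν) :
    Integrable (fun x : Fin n → α => g (x l)) (Measure.pi fun _ => ν) := by
  have := integrable_pi_prod ν (fun i t => if i = l then g t else 1)
    (fun i => by split_ifs with h; exacts [hg, integrable_const 1])
  refine this.congr (Filter.Eventually.of_forall fun x => ?_)
  simp [Finset.prod_ite_eq']

lemma pi_eval_integral {n : ℕ} (l : Fin n) (g : α → ℝ) :
    ∫ x : Fin n → α, g (x l) ∂(Measure.pi fun _ => ν) = ∫ t, g t ∂ν := by
  have h1 := integral_pi_prod ν (fun i t => if i = l then g t else 1)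
  have h2 : ∀ i : Fin n, ∫ t, (if i = l then g t else 1) ∂ν = if i = l then ∫ t, g t ∂ν else 1 := by
    intro i; split_ifs <;> simp
  simp only [h2] at h1
  rw [show (fun x : Fin n → α => g (x l)) = fun x => ∏ i, if i = l then g (x i) else 1 by
    ext x; simp [Finset.prod_ite_eq']]
  rw [h1, Finset.prod_ite_eq']
  simp

set_option maxHeartbeats 1000000 in
lemma inner_exp (N : ℕ) (c : ℝ) (M : Matrix (Fin N) (Fin N) ℝ) :
    ∫ A : Fin N → Fin N → ℝ, (c • (Matrix.of A * M) - 1).det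
      ∂(Measure.pi fun _ : Fin N => Measure.pi fun _ : Fin N => gaussianReal 0 1)
      = (-1 : ℝ) ^ N := by
  set ν : Measure (Fin N → ℝ) := Measure.pi fun _ => gaussianReal 0 1 with hν
  set g : Fin N → Fin N → (Fin N → ℝ) → ℝ :=
    fun j k r => c * (∑ l, r l * M l k) - (if j = k then 1 else 0) with hg
  have hid : Integrable (fun x : ℝ => x) (gaussianReal 0 1) := by
    simpa using gauss_pow_integrable 1
  have hgint : ∀ j k, Integrable (g j k) ν := by
    intro j k
    apply Integrable.sub _ (integrable_const _)
    apply Integrable.const_mul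
    apply integrable_finset_sum
    intro l _
    exact (pi_eval_integrable _ l hid).mul_const _
  have hgval : ∀ j k, ∫ r, g j k r ∂ν = -(if j = k then 1 else 0) := by
    intro j k
    rw [hg]
    dsimp only
    rw [integral_sub ((integrable_finset_sum _ (fun l _ => (pi_eval_integrable _ l hid).mul_const _)).const_mul c) (integrable_const _)]
    · rw [integral_const_mul, integral_finset_sum _ (fun l _ => (pi_eval_integrable _ l hid).mul_const _)]
      have : ∀ l, ∫ r : Fin N → ℝ, r l * M l k ∂ν = 0 := by
        intro l
        rw [hν, pi_eval_integral (gaussianReal 0 1) l (fun t => t * M l k),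
          integral_mul_const, gauss_mean, zero_mul]
      rw [Finset.sum_congr rfl fun l _ => this l]
      simp
  have hdet : ∀ A : Fin N → Fin N → ℝ, (c • (Matrix.of A * M) - 1).det
      = ∑ σ : Equiv.Perm (Fin N), ((Equiv.Perm.sign σ : ℤ) : ℝ) * ∏ j, g j (σ⁻¹ j) (A j) := by
    intro A
    rw [Matrix.det_apply]
    refine Finset.sum_congr rfl fun σ _ => ?_
    rw [Units.smul_def, zsmul_eq_mul]
    congr 1
    rw [← Equiv.prod_comp σ (fun j => g j (σ⁻¹ j) (A j))]
    refine Finset.prod_congr rfl fun i _ => ?_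
    simp [hg, Matrix.mul_apply, Matrix.sub_apply, Matrix.one_apply, smul_eq_mul, mul_comm]
  simp_rw [hdet]
  have hint : ∀ σ : Equiv.Perm (Fin N), Integrable (fun A : Fin N → Fin N → ℝ =>
      ((Equiv.Perm.sign σ : ℤ) : ℝ) * ∏ j, g j (σ⁻¹ j) (A j)) (Measure.pi fun _ => ν) :=
    fun σ => (integrable_pi_prod ν (fun j r => g j (σ⁻¹ j) r) (fun j => hgint j (σ⁻¹ j))).const_mul _
  rw [integral_finset_sum _ (fun σ _ => hint σ)]
  have hσint : ∀ σ : Equiv.Perm (Fin N),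
      ∫ A : Fin N → Fin N → ℝ, ((Equiv.Perm.sign σ : ℤ) : ℝ) * ∏ j, g j (σ⁻¹ j) (A j)
        ∂(Measure.pi fun _ => ν)
      = ((Equiv.Perm.sign σ : ℤ) : ℝ) * ∏ j, -(if j = (σ⁻¹ j) then (1:ℝ) else 0) := by
    intro σ
    rw [integral_const_mul, integral_pi_prod ν (fun j => g j (σ⁻¹ j))]
    simp_rw [hgval]
  simp_rw [hσint]
  rw [Finset.sum_eq_single 1]
  · simp [Finset.prod_const]
  · intro σ _ hσ
    have hex : ∃ j, σ⁻¹ j ≠ j := by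
      by_contra hcon
      push_neg at hcon
      refine hσ ?_
      ext j
      have := hcon (σ j)
      simp at this
      conv_lhs => rw [← this]
      simp
    obtain ⟨j, hj⟩ := hex
    rw [Finset.prod_eq_zero (Finset.mem_univ j) (by simpa using Ne.symm hj)]
    simp
  · simp

lemma integrable_mvpoly (D N : ℕ) (p : MvPolynomial (Fin D × Fin N × Fin N) ℝ) :
    Integrable (fun J : Fin D → Fin N → Fin N → ℝ =>
      MvPolynomial.eval (fun v => J v.1 v.2.1 v.2.2) p)
      (Measure.pi fun _ : Fin D => Measure.pi fun _ : Fin N =>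
        Measure.pi fun _ : Fin N => gaussianReal 0 1) := by
  simp_rw [MvPolynomial.eval_eq']
  apply integrable_finset_sum
  intro m _
  have key : Integrable (fun J : Fin D → Fin N → Fin N → ℝ =>
      ∏ d : Fin D, (fun A : Fin N → Fin N → ℝ =>
        ∏ i : Fin N, (fun r : Fin N → ℝ => ∏ j : Fin N, r j ^ m (d, i, j)) (A i)) (J d))
      (Measure.pi fun _ : Fin D => Measure.pi fun _ : Fin N =>
        Measure.pi fun _ : Fin N => gaussianReal 0 1) := by
    refine integrable_pi_prod (Measure.pi fun _ : Fin N => Measure.pi fun _ : Fin N => gaussianReal 0 1) (fun d A =>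
        ∏ i : Fin N, (fun r : Fin N → ℝ => ∏ j : Fin N, r j ^ m (d, i, j)) (A i)) fun d => ?_
    refine integrable_pi_prod (Measure.pi fun _ : Fin N => gaussianReal 0 1) (fun i r => ∏ j : Fin N, r j ^ m (d, i, j)) fun i => ?_
    exact integrable_pi_prod (gaussianReal 0 1) (fun j t => t ^ m (d, i, j)) fun j => gauss_pow_integrable _
  have := key.const_mul (MvPolynomial.coeff m p)
  refine this.congr (Filter.Eventually.of_forall fun J => ?_)
  dsimp only
  rw [Fintype.prod_prod_type]
  congr 1
  refine Finset.prod_congr rfl fun d _ => ?_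
  rw [Fintype.prod_prod_type]

lemma det_eval (N D : ℕ) (c : ℝ) :
    ∃ q : MvPolynomial (Fin D × Fin N × Fin N) ℝ, ∀ J : Fin D → Fin N → Fin N → ℝ,
      (c • (List.ofFn fun d : Fin D => Matrix.of (J d)).prod - (1 : Matrix (Fin N) (Fin N) ℝ)).det
        = MvPolynomial.eval (fun v => J v.1 v.2.1 v.2.2) q := by
  refine ⟨(((MvPolynomial.C c : MvPolynomial (Fin D × Fin N × Fin N) ℝ) • (List.ofFn fun d : Fin D =>
      Matrix.of fun i j => MvPolynomial.X (⟨d, i, j⟩ : Fin D × Fin N × Fin N)).prod - 1 :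
        Matrix (Fin N) (Fin N) (MvPolynomial (Fin D × Fin N × Fin N) ℝ))).det,
    fun J => ?_⟩
  set x : Fin D × Fin N × Fin N → ℝ := fun v => J v.1 v.2.1 v.2.2 with hx
  rw [RingHom.map_det]
  congr 1
  rw [map_sub, map_one]
  congr 1
  have hsmul : ∀ M : Matrix (Fin N) (Fin N) (MvPolynomial (Fin D × Fin N × Fin N) ℝ),
      (MvPolynomial.eval x).mapMatrix ((MvPolynomial.C c : MvPolynomial (Fin D × Fin N × Fin N) ℝ) • M)
        = c • (MvPolynomial.eval x).mapMatrix M := by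
    intro M
    ext i j
    simp [RingHom.mapMatrix_apply, Matrix.map_apply, smul_eq_mul]
  rw [hsmul]
  congr 1
  rw [map_list_prod, List.map_ofFn]
  refine congrArg _ (congrArg _ (funext fun d => ?_))
  ext i j
  simp [RingHom.mapMatrix_apply, Matrix.map_apply, hx]

set_option maxHeartbeats 1000000 in
theorem stmt11 (N D : ℕ) (hN : 1 ≤ N) (hD : 1 ≤ D)
    (μ : Measure (Fin D → Fin N → Fin N → ℝ))
    (hμ : μ = Measure.pi fun _ : Fin D =>
      Measure.pi fun _ : Fin N => Measure.pi fun _ : Fin N => gaussianReal 0 1)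
    (c : ℝ) :
    1 ≤ ∫ J : Fin D → Fin N → Fin N → ℝ,
          |(c • (List.ofFn fun d : Fin D => Matrix.of (J d)).prod -
              (1 : Matrix (Fin N) (Fin N) ℝ)).det| ∂μ := by
  subst hμ
  obtain ⟨D', rfl⟩ : ∃ D', D = D' + 1 := ⟨D - 1, (Nat.succ_pred_eq_of_pos hD).symm⟩
  set ν₂ : Measure (Fin N → Fin N → ℝ) :=
    Measure.pi fun _ : Fin N => Measure.pi fun _ : Fin N => gaussianReal 0 1 with hν₂
  set F : (Fin (D' + 1) → Fin N → Fin N → ℝ) → ℝ := fun J =>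
    (c • (List.ofFn fun d : Fin (D' + 1) => Matrix.of (J d)).prod - 1).det with hF
  haveI : IsProbabilityMeasure ν₂ := by rw [hν₂]; infer_instance
  obtain ⟨q, hq⟩ := det_eval N (D' + 1) c
  have hFint : Integrable F (Measure.pi fun _ : Fin (D' + 1) => ν₂) :=
    (integrable_mvpoly (D' + 1) N q).congr (Filter.Eventually.of_forall fun J => (hq J).symm)
  have hmp := (measurePreserving_piFinSuccAbove (fun _ : Fin (D' + 1) => ν₂) 0).symm
  have hIeq : ∫ J, F J ∂(Measure.pi fun _ : Fin (D' + 1) => ν₂) = (-1 : ℝ) ^ N := by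
    rw [← hmp.integral_comp']
    have hcint : Integrable
        (fun y : (Fin N → Fin N → ℝ) × (Fin D' → Fin N → Fin N → ℝ) =>
          F ((MeasurableEquiv.piFinSuccAbove (fun _ : Fin (D' + 1) => Fin N → Fin N → ℝ) 0).symm y))
        (ν₂.prod (Measure.pi fun _ : Fin D' => ν₂)) :=
      (hmp.integrable_comp_emb (MeasurableEquiv.measurableEmbedding _)).mpr hFint
    rw [integral_prod_symm _ hcint]
    have hin : ∀ R : Fin D' → Fin N → Fin N → ℝ,
        ∫ A : Fin N → Fin N → ℝ,
          F ((MeasurableEquiv.piFinSuccAbove (fun _ : Fin (D' + 1) => Fin N → Fin N → ℝ) 0).symm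
            (A, R)) ∂ν₂ = (-1 : ℝ) ^ N := by
      intro R
      have hAR : ∀ A : Fin N → Fin N → ℝ,
          F ((MeasurableEquiv.piFinSuccAbove (fun _ : Fin (D' + 1) => Fin N → Fin N → ℝ) 0).symm
            (A, R))
          = (c • (Matrix.of A * (List.ofFn fun d : Fin D' => Matrix.of (R d)).prod) - 1).det := by
        intro A
        simp only [hF, MeasurableEquiv.piFinSuccAbove_symm_apply, Fin.insertNthEquiv,
          Equiv.coe_fn_mk, Fin.insertNth_zero, cast_eq]
        congr 2
        rw [List.ofFn_succ, List.prod_cons]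
        simp [Fin.zero_succAbove, Fin.cons_zero, Fin.cons_succ]
      simp_rw [hAR]
      exact inner_exp N c _
    simp_rw [hin]
    simp
  calc (1 : ℝ) = |∫ J, F J ∂(Measure.pi fun _ : Fin (D' + 1) => ν₂)| := by
        rw [hIeq]; simp
    _ ≤ ∫ J, |F J| ∂(Measure.pi fun _ : Fin (D' + 1) => ν₂) := by
        simpa [Real.norm_eq_abs] using
          norm_integral_le_integral_norm (μ := Measure.pi fun _ : Fin (D' + 1) => ν₂) F
end

section
/- For a natural number N ≥ 1 and a real σ > 0, define R_N(σ) = (1/(√(2π)·(N−1)!)) · [ ∫_{N/σ²}^∞ t^{N−1} e^{−t} dt + 2^{N/2 − 1} · (N/σ²)^{N/2} · e^{−N/(2σ²)} · ∫_0^{N/(2σ²)} t^{N/2 − 1} e^{−t} dt ]. Then for every fixed σ > 1, R_N(σ) tends to 1/√(2π) as N → ∞. -/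
open MeasureTheory Real Filter

noncomputable def ginibreRealDensity (N : ℕ) (σ : ℝ) : ℝ :=
  (1 / (Real.sqrt (2 * π) * (Nat.factorial (N - 1) : ℝ))) *
    ((∫ t in Set.Ioi ((N : ℝ) / σ ^ 2), t ^ ((N : ℝ) - 1) * Real.exp (-t)) +
      (2 : ℝ) ^ ((N : ℝ) / 2 - 1) * ((N : ℝ) / σ ^ 2) ^ ((N : ℝ) / 2) *
          Real.exp (-(N : ℝ) / (2 * σ ^ 2)) *
        ∫ t in Set.Ioo (0 : ℝ) ((N : ℝ) / (2 * σ ^ 2)), t ^ ((N : ℝ) / 2 - 1) * Real.exp (-t))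

/-- pointwise bound: `t ^ c * exp (-t)` is maximized at `a` on `(0, a]` when `a ≤ c`. -/
lemma aux_pt {t a c : ℝ} (ht : 0 < t) (hta : t ≤ a) (hac : a ≤ c) :
    t ^ c * Real.exp (-t) ≤ a ^ c * Real.exp (-a) := by
  have ha : 0 < a := ht.trans_le hta
  have hlog : 1 - t / a ≤ Real.log (a / t) := by
    have h1 : Real.log (t / a) ≤ t / a - 1 := Real.log_le_sub_one_of_pos (by positivity)
    have h2 : Real.log (t / a) = - Real.log (a / t) := by
      rw [← Real.log_inv]; congr 1; field_simp
    rw [h2] at h1; linarith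
  have hta' : 0 ≤ 1 - t / a := by
    rw [sub_nonneg, div_le_one ha]; exact hta
  have key : a - t ≤ c * Real.log (a / t) := by
    have h1 : a - t = a * (1 - t / a) := by field_simp
    have h3 : a * (1 - t / a) ≤ c * (1 - t / a) := by nlinarith
    have h4 : c * (1 - t / a) ≤ c * Real.log (a / t) := by
      have hc : 0 ≤ c := ha.le.trans hac
      nlinarith
    linarith
  have e1 : t ^ c * Real.exp (-t) = t ^ c * Real.exp (a - t) * Real.exp (-a) := by
    rw [mul_assoc, ← Real.exp_add]; ring_nf
  rw [e1]
  have e2 : t ^ c * Real.exp (a - t) ≤ a ^ c := by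
    have h5 : Real.exp (a - t) ≤ (a / t) ^ c := by
      rw [Real.rpow_def_of_pos (by positivity)]
      exact Real.exp_le_exp.2 (by rw [mul_comm]; exact key)
    calc t ^ c * Real.exp (a - t) ≤ t ^ c * (a / t) ^ c := by
          exact mul_le_mul_of_nonneg_left h5 (Real.rpow_nonneg ht.le c)
      _ = (t * (a / t)) ^ c := (Real.mul_rpow ht.le (by positivity)).symm
      _ = a ^ c := by rw [mul_div_cancel₀ _ ht.ne']
  exact mul_le_mul_of_nonneg_right e2 (Real.exp_pos _).le

/-- bound on the lower incomplete gamma integral. -/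
lemma aux_int {a c : ℝ} (ha : 0 < a) (hac : a ≤ c) :
    ∫ t in Set.Ioo (0:ℝ) a, t ^ c * Real.exp (-t) ≤ a * (a ^ c * Real.exp (-a)) := by
  have hb :
      ‖∫ t in Set.Ioo (0:ℝ) a, t ^ c * Real.exp (-t)‖ ≤
        (a ^ c * Real.exp (-a)) * (volume (Set.Ioo (0:ℝ) a)).toReal := by
    refine norm_setIntegral_le_of_norm_le_const ?_ ?_
    · exact measure_Ioo_lt_top
    · intro x hx
      have hx0 : 0 < x := hx.1
      rw [Real.norm_eq_abs, abs_of_nonneg (by positivity)]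
      exact aux_pt hx.1 hx.2.le hac
  rw [Real.volume_Ioo, sub_zero, ENNReal.toReal_ofReal ha.le] at hb
  calc (∫ t in Set.Ioo (0:ℝ) a, t ^ c * Real.exp (-t))
      ≤ ‖∫ t in Set.Ioo (0:ℝ) a, t ^ c * Real.exp (-t)‖ := le_norm_self _
    _ ≤ (a ^ c * Real.exp (-a)) * a := hb
    _ = a * (a ^ c * Real.exp (-a)) := mul_comm _ _

lemma aux_int_nonneg (a c : ℝ) :
    0 ≤ ∫ t in Set.Ioo (0:ℝ) a, t ^ c * Real.exp (-t) := by
  refine setIntegral_nonneg measurableSet_Ioo fun x hx => ?_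
  have : 0 < x := hx.1
  positivity

/-- splitting the upper incomplete gamma integral. -/
lemma aux_split (N : ℕ) (hN : 1 ≤ N) {a : ℝ} (ha : 0 < a) :
    (∫ t in Set.Ioi a, t ^ ((N:ℝ) - 1) * Real.exp (-t))
      = (Nat.factorial (N-1) : ℝ) - ∫ t in Set.Ioo 0 a, t ^ ((N:ℝ) - 1) * Real.exp (-t) := by
  have hs : (0:ℝ) < N := by exact_mod_cast hN.trans_lt' Nat.zero_lt_one
  have hfe : (fun x:ℝ => Real.exp (-x) * x ^ ((N:ℝ) - 1))
      = fun x => x ^ ((N:ℝ) - 1) * Real.exp (-x) := by funext x; ring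
  have hint : IntegrableOn (fun x:ℝ => x ^ ((N:ℝ) - 1) * Real.exp (-x)) (Set.Ioi 0) := by
    have := Real.GammaIntegral_convergent hs
    rwa [hfe] at this
  have hg : (Nat.factorial (N-1) : ℝ)
      = ∫ x in Set.Ioi (0:ℝ), x ^ ((N:ℝ) - 1) * Real.exp (-x) := by
    have h1 := Real.Gamma_nat_eq_factorial (N - 1)
    have h2 : ((N - 1 : ℕ) : ℝ) + 1 = (N : ℝ) := by
      rw [Nat.cast_sub hN]; norm_num
    rw [h2] at h1
    rw [← h1, Real.Gamma_eq_integral hs, hfe]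
  have hdisj : Disjoint (Set.Ioc (0:ℝ) a) (Set.Ioi a) := Set.Ioc_disjoint_Ioi le_rfl
  have hunion : Set.Ioc (0:ℝ) a ∪ Set.Ioi a = Set.Ioi 0 := Set.Ioc_union_Ioi_eq_Ioi ha.le
  have hsplit := setIntegral_union (μ := volume)
    (f := fun x:ℝ => x ^ ((N:ℝ) - 1) * Real.exp (-x)) hdisj measurableSet_Ioi
    (hint.mono_set (by rw [← hunion]; exact Set.subset_union_left))
    (hint.mono_set (by rw [← hunion]; exact Set.subset_union_right))
  rw [hunion] at hsplit
  rw [← hg] at hsplit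
  rw [integral_Ioc_eq_integral_Ioo] at hsplit
  linarith

theorem stmt14 (σ : ℝ) (hσ : 1 < σ) :
    Filter.Tendsto (fun N : ℕ => ginibreRealDensity N σ) Filter.atTop
      (nhds (1 / Real.sqrt (2 * π))) := by
  have hσ0 : 0 < σ := lt_trans one_pos hσ
  have hσ2 : 1 < σ ^ 2 := by nlinarith
  set c : ℝ := (σ ^ 2)⁻¹ with hc
  have hc0 : 0 < c := by positivity
  have hc1 : c < 1 := by rw [hc, inv_lt_one_iff₀]; right; exact hσ2
  set r : ℝ := c * Real.exp (1 - c) with hrdef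
  have hr0 : 0 < r := by positivity
  have hr1 : r < 1 := by
    have h := Real.add_one_lt_exp (x := c - 1) (by intro h; apply absurd hc1; simp [show c = 1 by linarith])
    have h2 : c < Real.exp (c - 1) := by linarith
    have h3 : r < Real.exp (c - 1) * Real.exp (1 - c) := by
      rw [hrdef]; exact mul_lt_mul_of_pos_right h2 (Real.exp_pos _)
    rwa [← Real.exp_add, show c - 1 + (1 - c) = 0 by ring, Real.exp_zero] at h3
  -- the dominating sequence
  have hW : Tendsto (fun N : ℕ => (N:ℝ) * r ^ N) atTop (nhds 0) := by
    have := tendsto_pow_const_mul_const_pow_of_lt_one 1 hr0.le hr1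
    simpa using this
  -- eventual hypothesis
  have hev : ∀ᶠ N : ℕ in atTop, 2 ≤ (N:ℝ) * (1 - c) := by
    have ht : Tendsto (fun N : ℕ => (N:ℝ) * (1 - c)) atTop atTop :=
      (tendsto_natCast_atTop_atTop (R := ℝ)).atTop_mul_const (by linarith)
    exact ht.eventually_ge_atTop 2
  set s : ℝ := Real.sqrt (2 * π) with hsdef
  have hs0 : 0 < s := Real.sqrt_pos.mpr (by positivity)
  set F : ℕ → ℝ := fun N => (Nat.factorial (N-1) : ℝ) with hF
  have hF0 : ∀ N, 0 < F N := fun N => by positivity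
  set γ₁ : ℕ → ℝ := fun N => ∫ t in Set.Ioo (0:ℝ) ((N:ℝ) / σ ^ 2),
    t ^ ((N:ℝ) - 1) * Real.exp (-t) with hγ₁
  set T2 : ℕ → ℝ := fun N => (2 : ℝ) ^ ((N : ℝ) / 2 - 1) * ((N : ℝ) / σ ^ 2) ^ ((N : ℝ) / 2) *
          Real.exp (-(N : ℝ) / (2 * σ ^ 2)) *
        ∫ t in Set.Ioo (0 : ℝ) ((N : ℝ) / (2 * σ ^ 2)), t ^ ((N : ℝ) / 2 - 1) * Real.exp (-t)
    with hT2
  -- key bound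
  have hkey : ∀ N : ℕ, 2 ≤ (N:ℝ) * (1 - c) →
      γ₁ N ≤ (N:ℝ) * r ^ N * F N ∧ T2 N ≤ (N:ℝ) * r ^ N * F N ∧ 0 ≤ T2 N ∧ 1 ≤ N := by
    intro N h2
    have hN2 : (2:ℝ) ≤ (N:ℝ) := by nlinarith
    have hN1 : 1 ≤ N := Nat.one_le_iff_ne_zero.mpr (by rintro rfl; norm_num at hN2)
    have hNpos : (0:ℝ) < N := by linarith
    set a : ℝ := (N:ℝ) / σ ^ 2 with ha
    have hac : a = (N:ℝ) * c := by rw [ha, hc]; ring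
    have ha0 : 0 < a := by rw [hac]; positivity
    have haN : a ≤ (N:ℝ) - 1 := by
      rw [hac]; nlinarith
    set b : ℝ := (N:ℝ) / (2 * σ ^ 2) with hb
    have hb0 : 0 < b := by rw [hb]; positivity
    have hba : a = 2 * b := by rw [ha, hb]; ring
    have hbN : b ≤ (N:ℝ) / 2 - 1 := by
      have : b = (N:ℝ) * c / 2 := by rw [hb, hc]; ring
      rw [this]; nlinarith
    -- factorial lower bound: N^N ≤ exp N * (N * F N)
    have hfact : (N:ℝ) ^ N ≤ Real.exp N * ((N:ℝ) * F N) := by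
      have h1 := Real.pow_div_factorial_le_exp (x := (N:ℝ)) hNpos.le N
      have h2 : ((N.factorial : ℝ)) = (N:ℝ) * F N := by
        rw [hF]
        rw [← Nat.cast_mul]
        norm_cast
        exact (Nat.mul_factorial_pred (by omega)).symm
      rw [div_le_iff₀ (by positivity)] at h1
      calc (N:ℝ) ^ N ≤ Real.exp (N:ℝ) * (N.factorial : ℝ) := h1
        _ = Real.exp N * ((N:ℝ) * F N) := by rw [h2]
    -- the central estimate: a ^ N * exp (-a) ≤ N * r ^ N * F N
    have hcentral : a ^ N * Real.exp (-a) ≤ (N:ℝ) * r ^ N * F N := by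
      have eexp : Real.exp ((N:ℝ) * (1 - c)) * Real.exp (-(N:ℝ)) =
          Real.exp (-((N:ℝ) * c)) := by
        rw [← Real.exp_add]; congr 1; ring
      have hid : a ^ N * Real.exp (-a) = r ^ N * ((N:ℝ) ^ N * Real.exp (-(N:ℝ))) := by
        rw [hac, hrdef, mul_pow, mul_pow, ← Real.exp_nat_mul, ← eexp]
        ring
      rw [hid]
      calc r ^ N * ((N:ℝ) ^ N * Real.exp (-(N:ℝ)))
          ≤ r ^ N * ((Real.exp N * ((N:ℝ) * F N)) * Real.exp (-(N:ℝ))) := by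
            apply mul_le_mul_of_nonneg_left _ (by positivity)
            exact mul_le_mul_of_nonneg_right hfact (Real.exp_pos _).le
        _ = (N:ℝ) * r ^ N * F N := by
            have hee : Real.exp (N:ℝ) * Real.exp (-(N:ℝ)) = 1 := by
              rw [← Real.exp_add, add_neg_cancel, Real.exp_zero]
            linear_combination (r ^ N * ((N:ℝ) * F N)) * hee
    -- rpow identities
    have hrpowa : a ^ ((N:ℝ) - 1) * a = a ^ N := by
      rw [← Real.rpow_natCast a N, show ((N:ℕ):ℝ) = ((N:ℝ) - 1) + 1 by ring,
        Real.rpow_add_one ha0.ne']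
      norm_num
    refine ⟨?_, ?_, ?_, hN1⟩
    · -- γ₁ bound
      have h1 : γ₁ N ≤ a * (a ^ ((N:ℝ) - 1) * Real.exp (-a)) := aux_int ha0 haN
      calc γ₁ N ≤ a * (a ^ ((N:ℝ) - 1) * Real.exp (-a)) := h1
        _ = a ^ N * Real.exp (-a) := by rw [← hrpowa]; ring
        _ ≤ (N:ℝ) * r ^ N * F N := hcentral
    · -- T2 bound
      have hγ₂ : (∫ t in Set.Ioo (0 : ℝ) b, t ^ ((N : ℝ) / 2 - 1) * Real.exp (-t))
          ≤ b * (b ^ ((N:ℝ)/2 - 1) * Real.exp (-b)) := aux_int hb0 hbN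
      have hexpb : Real.exp (-(N:ℝ) / (2 * σ ^ 2)) = Real.exp (-b) := by
        rw [hb]; ring_nf
      have hT2le : T2 N ≤ (2 : ℝ) ^ ((N : ℝ) / 2 - 1) * a ^ ((N : ℝ) / 2) *
          Real.exp (-b) * (b * (b ^ ((N:ℝ)/2 - 1) * Real.exp (-b))) := by
        have hT2N : T2 N = (2 : ℝ) ^ ((N : ℝ) / 2 - 1) * a ^ ((N : ℝ) / 2) *
            Real.exp (-b) *
            ∫ t in Set.Ioo (0 : ℝ) b, t ^ ((N : ℝ) / 2 - 1) * Real.exp (-t) := by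
          rw [hT2]
          simp only [ha, hb, hexpb]
        rw [hT2N]
        apply mul_le_mul_of_nonneg_left hγ₂
        have := Real.rpow_nonneg ha0.le ((N:ℝ)/2)
        positivity
      have hsimp : (2 : ℝ) ^ ((N : ℝ) / 2 - 1) * a ^ ((N : ℝ) / 2) *
          Real.exp (-b) * (b * (b ^ ((N:ℝ)/2 - 1) * Real.exp (-b))) ≤
          a ^ N * Real.exp (-a) := by
        have hbr : b * b ^ ((N:ℝ)/2 - 1) = b ^ ((N:ℝ)/2) := by
          rw [mul_comm, show (N:ℝ)/2 - 1 = (N:ℝ)/2 + (-1) by ring,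
            Real.rpow_add hb0, Real.rpow_neg_one]
          field_simp
        have h21 : (2 : ℝ) ^ ((N : ℝ) / 2 - 1) ≤ (2 : ℝ) ^ ((N : ℝ) / 2) :=
          Real.rpow_le_rpow_of_exponent_le (by norm_num) (by linarith)
        have hprod : (2 : ℝ) ^ ((N : ℝ) / 2) * a ^ ((N : ℝ) / 2) * b ^ ((N:ℝ)/2) *
            (Real.exp (-b) * Real.exp (-b)) = a ^ N * Real.exp (-a) := by
          have e1 : (2 : ℝ) ^ ((N : ℝ) / 2) * b ^ ((N:ℝ)/2) = a ^ ((N:ℝ)/2) := by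
            rw [← Real.mul_rpow (by norm_num) hb0.le, ← hba]
          have e2 : a ^ ((N:ℝ)/2) * a ^ ((N:ℝ)/2) = a ^ N := by
            rw [← Real.rpow_add ha0, ← Real.rpow_natCast a N]
            congr 1; push_cast; ring
          have e3 : Real.exp (-b) * Real.exp (-b) = Real.exp (-a) := by
            rw [← Real.exp_add, hba]; ring_nf
          calc (2 : ℝ) ^ ((N : ℝ) / 2) * a ^ ((N : ℝ) / 2) * b ^ ((N:ℝ)/2) *
              (Real.exp (-b) * Real.exp (-b))
              = ((2 : ℝ) ^ ((N : ℝ) / 2) * b ^ ((N:ℝ)/2)) * a ^ ((N:ℝ)/2) *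
                (Real.exp (-b) * Real.exp (-b)) := by ring
            _ = a ^ N * Real.exp (-a) := by rw [e1, e2, e3]
        calc (2 : ℝ) ^ ((N : ℝ) / 2 - 1) * a ^ ((N : ℝ) / 2) *
            Real.exp (-b) * (b * (b ^ ((N:ℝ)/2 - 1) * Real.exp (-b)))
            = (2 : ℝ) ^ ((N : ℝ) / 2 - 1) * a ^ ((N : ℝ) / 2) * (b * b ^ ((N:ℝ)/2 - 1)) *
              (Real.exp (-b) * Real.exp (-b)) := by ring
          _ = (2 : ℝ) ^ ((N : ℝ) / 2 - 1) * a ^ ((N : ℝ) / 2) * b ^ ((N:ℝ)/2) *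
              (Real.exp (-b) * Real.exp (-b)) := by rw [hbr]
          _ ≤ (2 : ℝ) ^ ((N : ℝ) / 2) * a ^ ((N : ℝ) / 2) * b ^ ((N:ℝ)/2) *
              (Real.exp (-b) * Real.exp (-b)) := by
              have h0a := Real.rpow_nonneg ha0.le ((N:ℝ)/2)
              have h0b := Real.rpow_nonneg hb0.le ((N:ℝ)/2)
              have he := Real.exp_pos (-b)
              apply mul_le_mul_of_nonneg_right _ (by positivity)
              apply mul_le_mul_of_nonneg_right _ h0b
              exact mul_le_mul_of_nonneg_right h21 h0a
          _ = a ^ N * Real.exp (-a) := hprod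
      exact le_trans hT2le (le_trans hsimp hcentral)
    · -- T2 nonneg
      have hT2N : T2 N = (2 : ℝ) ^ ((N : ℝ) / 2 - 1) * a ^ ((N : ℝ) / 2) *
          Real.exp (-b) *
          ∫ t in Set.Ioo (0 : ℝ) b, t ^ ((N : ℝ) / 2 - 1) * Real.exp (-t) := by
        have hexpb : Real.exp (-(N:ℝ) / (2 * σ ^ 2)) = Real.exp (-b) := by
          rw [hb]; ring_nf
        rw [hT2]
        simp only [ha, hb, hexpb]
      rw [hT2N]
      have hi := aux_int_nonneg b ((N:ℝ)/2 - 1)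
      have h2p : (0:ℝ) < (2 : ℝ) ^ ((N : ℝ) / 2 - 1) := Real.rpow_pos_of_pos (by norm_num) _
      have hap := Real.rpow_nonneg ha0.le ((N:ℝ)/2)
      have hep := (Real.exp_pos (-b)).le
      positivity
  -- u and v tend to 0
  have hu : Tendsto (fun N : ℕ => γ₁ N / F N) atTop (nhds 0) := by
    apply tendsto_of_tendsto_of_tendsto_of_le_of_le' tendsto_const_nhds hW
    · exact Eventually.of_forall fun N => div_nonneg (aux_int_nonneg _ _) (hF0 N).le
    · filter_upwards [hev] with N hN
      exact (div_le_iff₀ (hF0 N)).mpr ((hkey N hN).1)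
  have hv : Tendsto (fun N : ℕ => T2 N / F N) atTop (nhds 0) := by
    apply tendsto_of_tendsto_of_tendsto_of_le_of_le' tendsto_const_nhds hW
    · filter_upwards [hev] with N hN
      exact div_nonneg (hkey N hN).2.2.1 (hF0 N).le
    · filter_upwards [hev] with N hN
      exact (div_le_iff₀ (hF0 N)).mpr ((hkey N hN).2.1)
  -- rewrite the density
  have hD : ∀ᶠ N : ℕ in atTop, ginibreRealDensity N σ
      = (1 / s) * (1 - γ₁ N / F N + T2 N / F N) := by
    filter_upwards [hev] with N hN
    have hN1 : 1 ≤ N := (hkey N hN).2.2.2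
    have hNpos : (0:ℝ) < N := by exact_mod_cast Nat.lt_of_lt_of_le Nat.zero_lt_one hN1
    have ha0 : (0:ℝ) < (N:ℝ) / σ ^ 2 := by positivity
    have hsplit := aux_split N hN1 ha0
    rw [ginibreRealDensity, hsplit]
    have hFne : F N ≠ 0 := (hF0 N).ne'
    rw [show (Nat.factorial (N - 1) : ℝ) = F N from rfl,
      show (∫ t in Set.Ioo (0:ℝ) ((N:ℝ) / σ ^ 2), t ^ ((N:ℝ) - 1) * Real.exp (-t)) = γ₁ N
        from rfl,
      show (2 : ℝ) ^ ((N : ℝ) / 2 - 1) * ((N : ℝ) / σ ^ 2) ^ ((N : ℝ) / 2) *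
          Real.exp (-(N : ℝ) / (2 * σ ^ 2)) *
        (∫ t in Set.Ioo (0 : ℝ) ((N : ℝ) / (2 * σ ^ 2)), t ^ ((N : ℝ) / 2 - 1) * Real.exp (-t))
        = T2 N from rfl,
      ← hsdef]
    field_simp
  -- conclude
  have hlim : Tendsto (fun N : ℕ => (1 / s) * (1 - γ₁ N / F N + T2 N / F N)) atTop
      (nhds (1 / s)) := by
    have h1 : Tendsto (fun N : ℕ => 1 - γ₁ N / F N + T2 N / F N) atTop (nhds 1) := by
      have := (tendsto_const_nhds (x := (1:ℝ)) (f := atTop (α := ℕ))).sub hu |>.add hv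
      simpa using this
    have := h1.const_mul (1 / s)
    simpa using this
  exact (hlim.congr' (hD.mono fun N h => h.symm))
end

section
/- For a natural number N ≥ 1 and a real σ > 0, define R_N(σ) = (1/(√(2π)·(N−1)!)) · [ ∫_{N/σ²}^∞ t^{N−1} e^{−t} dt + 2^{N/2 − 1} · (N/σ²)^{N/2} · e^{−N/(2σ²)} · ∫_0^{N/(2σ²)} t^{N/2 − 1} e^{−t} dt ]. Then for every fixed σ with 0 < σ < 1, the product e^{N·(log σ + (1/σ² − 1)/2)} · R_N(σ) tends to 1/√(4π) as N → ∞. -/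
open MeasureTheory Real Filter

open Set Nat


lemma gammaInt {a : ℝ} (ha : 0 < a) :
    ∫ t in Set.Ioi (0:ℝ), t ^ (a - 1) * Real.exp (-t) = Real.Gamma a := by
  have := Real.integral_rpow_mul_exp_neg_mul_Ioi ha one_pos
  simpa using this

lemma intOn {a : ℝ} (ha : 0 < a) :
    IntegrableOn (fun t : ℝ => t ^ (a - 1) * Real.exp (-t)) (Set.Ioi 0) := by
  exact (Real.GammaIntegral_convergent ha).congr_fun (fun t ht => mul_comm _ _) measurableSet_Ioi

lemma intOn2 {a x : ℝ} (ha : 0 < a) (hx : 0 < x) :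
    IntegrableOn (fun t : ℝ => t ^ (a - 1) * Real.exp (-(x⁻¹ * t))) (Set.Ioi 0) := by
  have := integrableOn_rpow_mul_exp_neg_mul_rpow (s := a - 1) (p := 1) (b := x⁻¹)
    (by linarith) one_pos (inv_pos.mpr hx)
  refine this.congr_fun (fun t ht => by simp only [Real.rpow_one, neg_mul]) measurableSet_Ioi

lemma splitGamma {a c : ℝ} (ha : 0 < a) (hc : 0 < c) :
    Real.Gamma a = (∫ t in Set.Ioo (0:ℝ) c, t ^ (a - 1) * Real.exp (-t))
      + ∫ t in Set.Ioi c, t ^ (a - 1) * Real.exp (-t) := by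
  rw [← gammaInt ha]
  have h1 : Set.Ioi (0:ℝ) = Set.Ioo 0 c ∪ Set.Ici c := by
    ext t; simp only [Set.mem_Ioi, Set.mem_union, Set.mem_Ioo, Set.mem_Ici]
    constructor
    · intro h; rcases lt_or_ge t c with h' | h'; exact Or.inl ⟨h, h'⟩; exact Or.inr h'
    · rintro (⟨h, _⟩ | h); exact h; linarith
  rw [h1, setIntegral_union ?_ measurableSet_Ici ?_ ?_]
  · rw [MeasureTheory.integral_Ici_eq_integral_Ioi]
  · rw [Set.disjoint_left]; rintro t ⟨_, h2⟩ h3; exact absurd h3 (not_le.mpr h2)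
  · exact (intOn ha).mono_set Set.Ioo_subset_Ioi_self
  · exact (intOn ha).mono_set (Set.Ici_subset_Ioi.mpr hc) -- fix

lemma tail_le {a x : ℝ} (ha : 1 ≤ a) (hx : 1 < x) :
    ∫ t in Set.Ioi (a * x), t ^ (a - 1) * Real.exp (-t)
      ≤ x ^ a * Real.exp (-(a * (x - 1))) * Real.Gamma a := by
  have h0a : 0 < a := lt_of_lt_of_le one_pos ha
  have h0x : 0 < x := lt_trans one_pos hx
  have hax : 0 < a * x := mul_pos h0a h0x
  have hsub : Set.Ioi (a * x) ⊆ Set.Ioi (0:ℝ) := Set.Ioi_subset_Ioi hax.le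
  have step1 : ∫ t in Set.Ioi (a * x), t ^ (a - 1) * Real.exp (-t)
      ≤ ∫ t in Set.Ioi (a * x), Real.exp (-(a * (x - 1))) * (t ^ (a - 1) * Real.exp (-(x⁻¹ * t))) := by
    refine setIntegral_mono_on ((intOn h0a).mono_set hsub)
      (((intOn2 h0a h0x).mono_set hsub).const_mul _) measurableSet_Ioi (fun t ht => ?_)
    have ht' : a * x < t := ht
    rw [← mul_assoc, mul_comm (Real.exp _) (t ^ (a-1)), mul_assoc]
    refine mul_le_mul_of_nonneg_left ?_ (Real.rpow_nonneg (le_trans hax.le ht'.le) _)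
    rw [← Real.exp_add]
    refine Real.exp_le_exp.mpr ?_
    have hxinv : x⁻¹ * x = 1 := inv_mul_cancel₀ h0x.ne'
    have h1x : 0 < 1 - x⁻¹ := by
      rw [sub_pos]
      exact inv_lt_one_of_one_lt₀ hx
    nlinarith [mul_lt_mul_of_pos_right ht' h1x, hxinv]
  have step2 : ∫ t in Set.Ioi (a * x), Real.exp (-(a * (x - 1))) * (t ^ (a - 1) * Real.exp (-(x⁻¹ * t)))
      ≤ Real.exp (-(a * (x - 1))) * ∫ t in Set.Ioi (0:ℝ), t ^ (a - 1) * Real.exp (-(x⁻¹ * t)) := by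
    rw [MeasureTheory.integral_const_mul]
    refine mul_le_mul_of_nonneg_left ?_ (Real.exp_nonneg _)
    refine setIntegral_mono_set (intOn2 h0a h0x) ?_ (HasSubset.Subset.eventuallyLE hsub)
    filter_upwards [self_mem_ae_restrict measurableSet_Ioi] with t ht
    exact mul_nonneg (Real.rpow_nonneg (le_of_lt ht) _) (Real.exp_nonneg _)
  have hval : ∫ t in Set.Ioi (0:ℝ), t ^ (a - 1) * Real.exp (-(x⁻¹ * t)) = x ^ a * Real.Gamma a := by
    rw [Real.integral_rpow_mul_exp_neg_mul_Ioi h0a (inv_pos.mpr h0x), one_div, inv_inv]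
  calc _ ≤ _ := step1
    _ ≤ _ := step2
    _ = x ^ a * Real.exp (-(a * (x - 1))) * Real.Gamma a := by rw [hval]; ring


noncomputable def gM (N : ℕ) : ℝ :=
  2 ^ ((N : ℝ) / 2 - 1) * (N : ℝ) ^ ((N : ℝ) / 2) * Real.exp (-(N : ℝ) / 2) *
    Real.Gamma ((N : ℝ) / 2) / (Real.sqrt (2 * π) * Real.Gamma (N : ℝ))

lemma sqrt2pi : Real.sqrt (2 * π) = Real.sqrt 2 * Real.sqrt π := Real.sqrt_mul (by norm_num) _
lemma sqrt4pi : Real.sqrt (4 * π) = 2 * Real.sqrt π := by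
  rw [Real.sqrt_mul (by norm_num), show (4:ℝ) = 2^2 by norm_num, Real.sqrt_sq (by norm_num)]

lemma gM_even (m : ℕ) :
    gM (2 * (m + 1)) = Stirling.stirlingSeq (m + 1) / Stirling.stirlingSeq (2 * (m + 1))
      / Real.sqrt (4 * π) := by
  set n := m + 1 with hn
  have hn0 : (0:ℝ) < (n:ℝ) := by positivity
  unfold gM Stirling.stirlingSeq
  have h1 : ((2 * n : ℕ) : ℝ) / 2 = (n : ℝ) := by push_cast; ring
  rw [h1]
  have h2 : ((n : ℝ) - 1) = ((m : ℕ) : ℝ) := by push_cast [hn]; ring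
  rw [h2, Real.rpow_natCast, Real.rpow_natCast]
  have hΓ1 : Real.Gamma (n : ℝ) = (m ! : ℝ) := by
    rw [hn]; push_cast; exact_mod_cast Real.Gamma_nat_eq_factorial m
  have hΓ2 : Real.Gamma ((2 * n : ℕ) : ℝ) = ((2 * m + 1)! : ℝ) := by
    have : ((2 * n : ℕ) : ℝ) = ((2 * m + 1 : ℕ) : ℝ) + 1 := by push_cast [hn]; ring
    rw [this, Real.Gamma_nat_eq_factorial]
  have h3 : (-((2 * n : ℕ):ℝ) / 2) = -(n:ℝ) := by push_cast; ring
  rw [hΓ1, hΓ2, h3]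
  have hfn : (n ! : ℝ) = (n : ℝ) * (m ! : ℝ) := by rw [hn]; push_cast [Nat.factorial_succ]; ring
  have hf2n : ((2 * n)! : ℝ) = 2 * (n:ℝ) * ((2 * m + 1)! : ℝ) := by
    have : 2 * n = (2 * m + 1) + 1 := by omega
    rw [this]; push_cast [Nat.factorial_succ, hn]; ring
  rw [hfn, hf2n]
  have hsq1 : Real.sqrt (2 * (n:ℕ)) = Real.sqrt 2 * Real.sqrt n := by
    push_cast; exact Real.sqrt_mul (by norm_num) _
  have hsq2 : Real.sqrt (2 * ((2 * n : ℕ):ℝ)) = 2 * Real.sqrt n := by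
    have h4 : (2 * ((2 * n : ℕ):ℝ)) = 2^2 * (n:ℝ) := by push_cast; ring
    rw [h4, Real.sqrt_mul (by positivity), Real.sqrt_sq (by norm_num)]
  have hc : ((2 * n : ℕ):ℝ) = 2 * (n:ℝ) := by push_cast; ring
  rw [hsq2, sqrt2pi, sqrt4pi, hsq1, hc]
  have hexp : Real.exp (-(n:ℝ)) = (Real.exp 1 ^ (n:ℕ))⁻¹ := by
    rw [← Real.exp_nat_mul, ← Real.exp_neg]; norm_num
  have hpow2n : ((2 * (n:ℝ)) / Real.exp 1) ^ (2 * n) = ((2 * (n:ℝ))^(2*n)) / (Real.exp 1)^(2*n) := div_pow _ _ _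
  have hpown : (((n:ℝ)) / Real.exp 1) ^ n = ((n:ℝ)^n) / (Real.exp 1)^n := div_pow _ _ _
  have e0 : Real.exp 1 ≠ 0 := (Real.exp_pos 1).ne'
  rw [hexp, hpow2n, hpown]
  have hsn : Real.sqrt (n:ℝ) ≠ 0 := by positivity
  have hfact1 : ((m ! : ℕ):ℝ) ≠ 0 := by positivity
  have hfact2 : (((2*m+1)! : ℕ):ℝ) ≠ 0 := by positivity
  have hng : (n:ℝ) ≠ 0 := hn0.ne'
  have hsp : Real.sqrt π ≠ 0 := by positivity
  have hs2 : Real.sqrt 2 ≠ 0 := by positivity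
  field_simp
  ring_nf
  rw [hn]
  ring

lemma gM_odd (m : ℕ) :
    gM (2 * (m + 1) + 1) = (1 + 1 / (2 * ((m+1 : ℕ):ℝ))) ^ (m+1 : ℕ)
      * Real.sqrt (1 + 1 / (2 * ((m+1 : ℕ):ℝ))) * Real.exp (-(1/2))
      / (2 * Stirling.stirlingSeq (m+1)) := by
  set k := m + 1 with hk
  have hk0 : (0:ℝ) < (k:ℝ) := by positivity
  have h2k1 : (0:ℝ) < 2*(k:ℝ)+1 := by positivity
  unfold gM Stirling.stirlingSeq
  have hN : ((2 * k + 1 : ℕ) : ℝ) = 2*(k:ℝ)+1 := by push_cast; ring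
  have hΓtop : Real.Gamma (((2 * k + 1 : ℕ)):ℝ) = ((2*k)! : ℝ) := by
    rw [show ((2 * k + 1 : ℕ):ℝ) = ((2*k : ℕ):ℝ) + 1 by push_cast; ring,
      Real.Gamma_nat_eq_factorial]
  have hdup := Real.Gamma_mul_Gamma_add_half ((k:ℝ) + 1/2)
  have hΓk1 : Real.Gamma ((k:ℝ) + 1/2 + 1/2) = (k ! : ℝ) := by
    rw [show (k:ℝ) + 1/2 + 1/2 = ((k:ℕ):ℝ) + 1 by ring, Real.Gamma_nat_eq_factorial]
  have hΓ2k1 : Real.Gamma (2 * ((k:ℝ) + 1/2)) = ((2*k)! : ℝ) := by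
    rw [show 2 * ((k:ℝ) + 1/2) = ((2*k:ℕ):ℝ) + 1 by push_cast; ring, Real.Gamma_nat_eq_factorial]
  have hpow2 : (2:ℝ) ^ (1 - 2 * ((k:ℝ) + 1/2)) = ((2:ℝ) ^ (2*k:ℕ))⁻¹ := by
    rw [show (1 - 2 * ((k:ℝ) + 1/2)) = -(((2*k:ℕ):ℝ)) by push_cast; ring,
      Real.rpow_neg (by norm_num), Real.rpow_natCast]
  rw [hΓk1, hΓ2k1, hpow2] at hdup
  have hkfac : (k ! : ℝ) ≠ 0 := by positivity
  have hΓhalf : Real.Gamma ((k:ℝ) + 1/2) = ((2*k)! : ℝ) * ((2:ℝ) ^ (2*k:ℕ))⁻¹ * Real.sqrt π / (k ! : ℝ) := by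
    field_simp at hdup ⊢
    linarith [hdup]
  -- rewrite the rpow pieces
  have e1 : ((2 * k + 1 : ℕ):ℝ)/2 - 1 = ((k:ℕ):ℝ) + (-(1/2)) := by push_cast; ring
  have e2 : ((2 * k + 1 : ℕ):ℝ)/2 = ((k:ℕ):ℝ) + (1/2) := by push_cast; ring
  have hb1 : (2:ℝ) ^ (((2 * k + 1 : ℕ):ℝ)/2 - 1) = (2:ℝ)^(k:ℕ) / Real.sqrt 2 := by
    rw [e1, Real.rpow_add (by norm_num), Real.rpow_natCast, Real.rpow_neg (by norm_num),
      ← Real.sqrt_eq_rpow]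
    ring
  have hb2 : ((2 * k + 1 : ℕ):ℝ) ^ (((2 * k + 1 : ℕ):ℝ)/2) =
      (2*(k:ℝ)+1)^(k:ℕ) * Real.sqrt (2*(k:ℝ)+1) := by
    rw [e2, Real.rpow_add (by rw [hN]; exact h2k1), Real.rpow_natCast, ← Real.sqrt_eq_rpow, hN]
  have hb3 : Real.exp (-((2 * k + 1 : ℕ):ℝ)/2) = Real.exp (-(k:ℝ)) * Real.exp (-(1/2)) := by
    rw [← Real.exp_add]; congr 1; push_cast; ring
  have hb4 : Real.Gamma (((2 * k + 1 : ℕ):ℝ)/2) = Real.Gamma ((k:ℝ) + 1/2) := by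
    rw [show (((2 * k + 1 : ℕ):ℝ))/2 = (k:ℝ) + 1/2 by push_cast; ring]
  rw [hb1, hb2, hb3, hb4, hΓtop, hΓhalf]
  -- RHS simplifications
  have hr1 : 1 + 1 / (2 * ((k : ℕ):ℝ)) = (2*(k:ℝ)+1) / (2*(k:ℝ)) := by field_simp
  have hr2 : Real.sqrt ((2*(k:ℝ)+1) / (2*(k:ℝ))) = Real.sqrt (2*(k:ℝ)+1) / (Real.sqrt 2 * Real.sqrt (k:ℝ)) := by
    rw [Real.sqrt_div h2k1.le, Real.sqrt_mul (by norm_num)]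
  have hr3 : ((2*(k:ℝ)+1) / (2*(k:ℝ))) ^ (k:ℕ) = (2*(k:ℝ)+1)^(k:ℕ) / ((2:ℝ)^(k:ℕ) * (k:ℝ)^(k:ℕ)) := by
    rw [div_pow, mul_pow]
  rw [hr1, hr2, hr3]
  have hsq1 : Real.sqrt (2 * ((k:ℕ)):ℝ) = Real.sqrt 2 * Real.sqrt (k:ℝ) := by
    push_cast; rw [Real.sqrt_mul (by norm_num)]
  rw [hsq1, sqrt2pi]
  have hexp : Real.exp (-(k:ℝ)) = (Real.exp 1 ^ (k:ℕ))⁻¹ := by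
    rw [← Real.exp_nat_mul, ← Real.exp_neg]; norm_num
  have hpown : (((k:ℝ)) / Real.exp 1) ^ (k:ℕ) = ((k:ℝ)^(k:ℕ)) / (Real.exp 1)^(k:ℕ) := div_pow _ _ _
  rw [hexp, hpown]
  have e0 : (0:ℝ) < Real.exp 1 := Real.exp_pos 1
  have hsn : Real.sqrt (k:ℝ) ≠ 0 := by positivity
  have hsp : Real.sqrt π ≠ 0 := by positivity
  have hs2 : Real.sqrt 2 ≠ 0 := by positivity
  have hf2k : (((2*k)! : ℕ):ℝ) ≠ 0 := by positivity
  have hkk : ((k:ℝ))^(k:ℕ) ≠ 0 := by positivity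
  have hek : (Real.exp 1)^(k:ℕ) ≠ 0 := by positivity
  have hex2 : Real.exp (-(1/2:ℝ)) ≠ 0 := (Real.exp_pos _).ne'
  have h23 : Real.sqrt 2 ^ 3 = 2 * Real.sqrt 2 := by
    rw [pow_succ, Real.sq_sqrt (by norm_num : (0:ℝ) ≤ 2)]
  field_simp
  ring_nf
  rw [Real.sq_sqrt (by norm_num : (0:ℝ) ≤ 2)]
  ring

lemma tendsto_even_odd {f : ℕ → ℝ} {l : ℝ}
    (he : Tendsto (fun k => f (2 * k)) atTop (nhds l))
    (ho : Tendsto (fun k => f (2 * k + 1)) atTop (nhds l)) :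
    Tendsto f atTop (nhds l) := by
  rw [Metric.tendsto_atTop] at he ho ⊢
  intro ε hε
  obtain ⟨K1, h1⟩ := he ε hε
  obtain ⟨K2, h2⟩ := ho ε hε
  refine ⟨2 * max K1 K2 + 1, fun n hn => ?_⟩
  rcases Nat.even_or_odd n with ⟨k, hk⟩ | ⟨k, hk⟩
  · have : K1 ≤ k := by omega
    simpa [hk, two_mul] using h1 k this
  · have : K2 ≤ k := by omega
    simpa [hk] using h2 k this

lemma two_mul_tendsto : Tendsto (fun k : ℕ => 2 * k) atTop atTop :=
  tendsto_atTop_mono (fun k => by simp; omega) tendsto_id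

lemma gM_tendsto : Tendsto gM atTop (nhds (1 / Real.sqrt (4 * π))) := by
  have hSpi := Stirling.tendsto_stirlingSeq_sqrt_pi
  have hS2 : Tendsto (fun k : ℕ => Stirling.stirlingSeq (2 * k)) atTop (nhds (Real.sqrt π)) :=
    hSpi.comp two_mul_tendsto
  have hsp : Real.sqrt π ≠ 0 := by positivity
  refine tendsto_even_odd ?_ ?_
  · -- even branch
    have hlim : Tendsto (fun k : ℕ => Stirling.stirlingSeq k / Stirling.stirlingSeq (2 * k)
        / Real.sqrt (4 * π)) atTop (nhds (1 / Real.sqrt (4 * π))) := by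
      have := (hSpi.div hS2 hsp).div_const (Real.sqrt (4 * π))
      rwa [div_self hsp] at this
    refine hlim.congr' ?_
    filter_upwards [eventually_ge_atTop 1] with k hk
    obtain ⟨m, rfl⟩ : ∃ m, k = m + 1 := ⟨k - 1, by omega⟩
    exact (gM_even m).symm
  · -- odd branch
    have h0 : Tendsto (fun k : ℕ => 1 / (2 * (k:ℝ))) atTop (nhds 0) := by
      have := tendsto_one_div_atTop_nhds_zero_nat.const_mul (1/2 : ℝ)
      rw [mul_zero] at this
      refine this.congr (fun k => ?_)
      rw [mul_one_div, div_div]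
    have h1 : Tendsto (fun k : ℕ => 1 + 1 / (2 * (k:ℝ))) atTop (nhds 1) := by
      simpa using tendsto_const_nhds.add h0
    have hpow : Tendsto (fun k : ℕ => (1 + 1 / (2 * (k:ℝ))) ^ (k:ℕ)) atTop
        (nhds (Real.exp (1/2))) := by
      refine (Real.tendsto_one_add_div_pow_exp (1/2)).congr (fun k => ?_)
      rw [div_div]
    have hsqrt : Tendsto (fun k : ℕ => Real.sqrt (1 + 1 / (2 * (k:ℝ)))) atTop (nhds 1) := by
      have := (Real.continuous_sqrt.tendsto 1).comp h1
      simpa [Function.comp_def] using this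
    have hden : Tendsto (fun k : ℕ => 2 * Stirling.stirlingSeq k) atTop
        (nhds (2 * Real.sqrt π)) := hSpi.const_mul 2
    have hlim : Tendsto (fun k : ℕ => (1 + 1 / (2 * (k:ℝ))) ^ (k:ℕ)
        * Real.sqrt (1 + 1 / (2 * (k:ℝ))) * Real.exp (-(1/2))
        / (2 * Stirling.stirlingSeq k)) atTop
        (nhds (Real.exp (1/2) * 1 * Real.exp (-(1/2)) / (2 * Real.sqrt π))) :=
      ((hpow.mul hsqrt).mul tendsto_const_nhds).div hden (by positivity)
    have hval : Real.exp (1/2) * 1 * Real.exp (-(1/2)) / (2 * Real.sqrt π)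
        = 1 / Real.sqrt (4 * π) := by
      rw [mul_one, ← Real.exp_add, sqrt4pi]
      norm_num
    rw [hval] at hlim
    refine hlim.congr' ?_
    filter_upwards [eventually_ge_atTop 1] with k hk
    obtain ⟨m, rfl⟩ : ∃ m, k = m + 1 := ⟨k - 1, by omega⟩
    exact (gM_odd m).symm

section scalars
variable {σ : ℝ}

lemma hexpNL (hσ0 : 0 < σ) (N : ℕ) :
    Real.exp ((N:ℝ) * (Real.log σ + (1/σ^2 - 1)/2)) =
      σ ^ (N:ℝ) * Real.exp ((N:ℝ) * (1/σ^2 - 1)/2) := by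
  rw [mul_add, Real.exp_add, Real.rpow_def_of_pos hσ0, mul_comm (Real.log σ)]
  ring_nf

lemma hscal (hσ0 : 0 < σ) (N : ℕ) :
    Real.exp ((N:ℝ) * (Real.log σ + (1/σ^2 - 1)/2)) * ((N:ℝ)/σ^2) ^ ((N:ℝ)/2) *
      Real.exp (-(N:ℝ)/(2*σ^2)) = (N:ℝ) ^ ((N:ℝ)/2) * Real.exp (-(N:ℝ)/2) := by
  have hσ2 : (0:ℝ) < σ^2 := by positivity
  have h1 : (N:ℝ)/σ^2 = (N:ℝ) * (1/σ^2) := by ring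
  have h2 : ((N:ℝ) * (1/σ^2)) ^ ((N:ℝ)/2) = (N:ℝ) ^ ((N:ℝ)/2) * (1/σ^2) ^ ((N:ℝ)/2) :=
    Real.mul_rpow (Nat.cast_nonneg N) (by positivity)
  have h3 : ((1:ℝ)/σ^2) ^ ((N:ℝ)/2) = (σ⁻¹) ^ (N:ℝ) := by
    rw [show (1:ℝ)/σ^2 = (σ⁻¹)^(2:ℕ) by field_simp, ← Real.rpow_natCast (σ⁻¹) 2,
      ← Real.rpow_mul (by positivity)]
    rw [show ((2:ℕ):ℝ) * ((N:ℝ)/2) = (N:ℝ) by push_cast; ring]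
  rw [hexpNL hσ0, h1, h2, h3]
  have h4 : σ ^ (N:ℝ) * σ⁻¹ ^ (N:ℝ) = 1 := by
    rw [← Real.mul_rpow hσ0.le (by positivity), mul_inv_cancel₀ hσ0.ne', Real.one_rpow]
  calc σ ^ (N:ℝ) * Real.exp ((N:ℝ)*(1/σ^2-1)/2) * ((N:ℝ)^((N:ℝ)/2) * σ⁻¹ ^ (N:ℝ)) *
        Real.exp (-(N:ℝ)/(2*σ^2))
      = (σ ^ (N:ℝ) * σ⁻¹ ^ (N:ℝ)) * (N:ℝ)^((N:ℝ)/2) *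
        (Real.exp ((N:ℝ)*(1/σ^2-1)/2) * Real.exp (-(N:ℝ)/(2*σ^2))) := by ring
    _ = (N:ℝ) ^ ((N:ℝ)/2) * Real.exp (-(N:ℝ)/2) := by
        rw [h4, one_mul, ← Real.exp_add]
        congr 2
        field_simp
        ring
end scalars

noncomputable def rhoAux (σ : ℝ) : ℝ := σ⁻¹ * Real.exp (-((1/σ^2 - 1)/2))

lemma rho_nonneg {σ : ℝ} (hσ0 : 0 < σ) : 0 ≤ rhoAux σ := by
  unfold rhoAux; positivity

lemma logpos {σ : ℝ} (hσ0 : 0 < σ) (hσ1 : σ < 1) :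
    0 < Real.log σ + (1/σ^2 - 1)/2 := by
  have hu1 : 1 < 1/σ^2 := by
    rw [lt_div_iff₀ (by positivity), one_mul]
    nlinarith
  have hlog := Real.log_lt_sub_one_of_pos (by positivity : (0:ℝ) < 1/σ^2) hu1.ne'
  have hlogu : Real.log (1/σ^2) = -(2 * Real.log σ) := by
    rw [one_div, Real.log_inv, Real.log_pow]
    push_cast; ring
  rw [hlogu] at hlog
  linarith

lemma rho_lt_one {σ : ℝ} (hσ0 : 0 < σ) (hσ1 : σ < 1) : rhoAux σ < 1 := by
  unfold rhoAux
  rw [show σ⁻¹ = Real.exp (-Real.log σ) by rw [Real.exp_neg, Real.exp_log hσ0],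
    ← Real.exp_add]
  refine Real.exp_lt_one_iff.mpr ?_
  have := logpos hσ0 hσ1
  linarith

lemma hscal2 {σ : ℝ} (hσ0 : 0 < σ) (N : ℕ) :
    Real.exp ((N:ℝ) * (Real.log σ + (1/σ^2 - 1)/2)) *
      ((1/σ^2) ^ (N:ℝ) * Real.exp (-((N:ℝ) * (1/σ^2 - 1)))) = rhoAux σ ^ N := by
  rw [hexpNL hσ0, Real.rpow_natCast, Real.rpow_natCast]
  have hσx : σ * (1/σ^2) = σ⁻¹ := by
    field_simp [sq]
  unfold rhoAux
  rw [mul_pow (σ⁻¹), ← Real.exp_nat_mul,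
    show σ ^ N * Real.exp ((N:ℝ)*(1/σ^2-1)/2) * ((1/σ^2) ^ N * Real.exp (-((N:ℝ)*(1/σ^2-1))))
      = (σ^N * (1/σ^2)^N) * (Real.exp ((N:ℝ)*(1/σ^2-1)/2) * Real.exp (-((N:ℝ)*(1/σ^2-1)))) from by ring,
    ← mul_pow, hσx, ← Real.exp_add]
  congr 1
  ring

lemma hscal3 {σ : ℝ} (hσ0 : 0 < σ) (N : ℕ) :
    (1/σ^2) ^ ((N:ℝ)/2) * Real.exp (-((N:ℝ)/2 * (1/σ^2 - 1))) = rhoAux σ ^ N := by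
  have h3 : ((1:ℝ)/σ^2) ^ ((N:ℝ)/2) = (σ⁻¹) ^ (N:ℝ) := by
    rw [show (1:ℝ)/σ^2 = (σ⁻¹)^(2:ℕ) by field_simp, ← Real.rpow_natCast (σ⁻¹) 2,
      ← Real.rpow_mul (by positivity)]
    rw [show ((2:ℕ):ℝ) * ((N:ℝ)/2) = (N:ℝ) by push_cast; ring]
  unfold rhoAux
  rw [h3, Real.rpow_natCast, mul_pow, ← Real.exp_nat_mul]
  congr 1
  congr 1
  ring

lemma main_eq {σ : ℝ} (hσ0 : 0 < σ) {N : ℕ} (hN : 1 ≤ N) :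
    Real.exp ((N:ℝ) * (Real.log σ + (1/σ^2 - 1)/2)) * ginibreRealDensity N σ =
      Real.exp ((N:ℝ) * (Real.log σ + (1/σ^2 - 1)/2)) *
        (∫ t in Set.Ioi ((N:ℝ)/σ^2), t ^ ((N:ℝ)-1) * Real.exp (-t))
        / (Real.sqrt (2*π) * Real.Gamma (N:ℝ))
      + gM N * (1 - (∫ t in Set.Ioi ((N:ℝ)/(2*σ^2)), t ^ ((N:ℝ)/2-1) * Real.exp (-t))
          / Real.Gamma ((N:ℝ)/2)) := by
  have hN0 : (0:ℝ) < (N:ℝ) := by exact_mod_cast hN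
  have hGN : 0 < Real.Gamma (N:ℝ) := Real.Gamma_pos_of_pos hN0
  have hG2 : 0 < Real.Gamma ((N:ℝ)/2) := Real.Gamma_pos_of_pos (by positivity)
  have hsq : (0:ℝ) < Real.sqrt (2*π) := by positivity
  have hfac : ((N-1)! : ℝ) = Real.Gamma (N:ℝ) := by
    have h : ((N-1:ℕ):ℝ) + 1 = (N:ℝ) := by
      rw [Nat.cast_sub hN]; push_cast; ring
    rw [← h, Real.Gamma_nat_eq_factorial]
  have hIoo : (∫ t in Set.Ioo (0:ℝ) ((N:ℝ)/(2*σ^2)), t ^ ((N:ℝ)/2-1) * Real.exp (-t))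
      = Real.Gamma ((N:ℝ)/2)
        - ∫ t in Set.Ioi ((N:ℝ)/(2*σ^2)), t ^ ((N:ℝ)/2-1) * Real.exp (-t) := by
    have := splitGamma (a := (N:ℝ)/2) (c := (N:ℝ)/(2*σ^2)) (by positivity) (by positivity)
    linarith
  unfold ginibreRealDensity
  rw [hfac, hIoo]
  have hW := hscal hσ0 N
  set U2 := ∫ t in Set.Ioi ((N:ℝ)/(2*σ^2)), t ^ ((N:ℝ)/2-1) * Real.exp (-t) with hU2
  set e := Real.exp ((N:ℝ) * (Real.log σ + (1/σ^2 - 1)/2)) with he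
  set P := ((N:ℝ)/σ^2) ^ ((N:ℝ)/2) with hP
  set Q := Real.exp (-(N:ℝ)/(2*σ^2)) with hQ
  set G2 := Real.Gamma ((N:ℝ)/2) with hG2d
  set c := (2:ℝ) ^ ((N:ℝ)/2 - 1) with hc
  set D := Real.sqrt (2*π) * Real.Gamma (N:ℝ) with hD
  have hterm : e * (c * P * Q * (G2 - U2)) / D = gM N * (1 - U2/G2) := by
    have h5 : e * (c * P * Q * (G2 - U2)) / D = (e * P * Q) * (c * (G2 - U2)) / D := by ring
    rw [h5, hW]
    unfold gM
    rw [← hG2d, ← hD, ← hc]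
    field_simp
  rw [← hterm]
  ring

theorem stmt15 (σ : ℝ) (hσ0 : 0 < σ) (hσ1 : σ < 1) :
    Filter.Tendsto
      (fun N : ℕ =>
        Real.exp ((N : ℝ) * (Real.log σ + (1 / σ ^ 2 - 1) / 2)) * ginibreRealDensity N σ)
      Filter.atTop (nhds (1 / Real.sqrt (4 * π))) := by
  have hx1 : 1 < 1/σ^2 := by
    rw [lt_div_iff₀ (by positivity), one_mul]
    nlinarith
  have hρ0 := rho_nonneg hσ0
  have hρ1 := rho_lt_one hσ0 hσ1
  have hρlim : Tendsto (fun N : ℕ => rhoAux σ ^ N) atTop (nhds 0) :=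
    tendsto_pow_atTop_nhds_zero_of_lt_one hρ0 hρ1
  set A : ℕ → ℝ := fun N => Real.exp ((N:ℝ) * (Real.log σ + (1/σ^2 - 1)/2)) *
        (∫ t in Set.Ioi ((N:ℝ)/σ^2), t ^ ((N:ℝ)-1) * Real.exp (-t))
        / (Real.sqrt (2*π) * Real.Gamma (N:ℝ)) with hA_def
  set r : ℕ → ℝ := fun N => (∫ t in Set.Ioi ((N:ℝ)/(2*σ^2)), t ^ ((N:ℝ)/2-1) * Real.exp (-t))
          / Real.Gamma ((N:ℝ)/2) with hr_def
  have hbound : Tendsto (fun N : ℕ => rhoAux σ ^ N / Real.sqrt (2*π)) atTop (nhds 0) := by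
    simpa using hρlim.div_const (Real.sqrt (2*π))
  have hA : Tendsto A atTop (nhds 0) := by
    refine squeeze_zero' ?_ ?_ hbound
    · filter_upwards [eventually_ge_atTop 1] with N hN
      have hN0 : (0:ℝ) < (N:ℝ) := by exact_mod_cast hN
      have hGN : 0 < Real.Gamma (N:ℝ) := Real.Gamma_pos_of_pos hN0
      refine div_nonneg (mul_nonneg (Real.exp_nonneg _) ?_) (by positivity)
      refine setIntegral_nonneg measurableSet_Ioi (fun t ht => ?_)
      have ht0 : 0 < t := lt_trans (by positivity) ht
      positivity
    · filter_upwards [eventually_ge_atTop 1] with N hN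
      have hN0 : (0:ℝ) < (N:ℝ) := by exact_mod_cast hN
      have hGN : 0 < Real.Gamma (N:ℝ) := Real.Gamma_pos_of_pos hN0
      have hNa : (1:ℝ) ≤ (N:ℝ) := by exact_mod_cast hN
      have htail := tail_le hNa hx1
      have hc1 : (N:ℝ)/σ^2 = (N:ℝ)*(1/σ^2) := by ring
      show Real.exp ((N:ℝ) * (Real.log σ + (1/σ^2 - 1)/2)) *
        (∫ t in Set.Ioi ((N:ℝ)/σ^2), t ^ ((N:ℝ)-1) * Real.exp (-t))
        / (Real.sqrt (2*π) * Real.Gamma (N:ℝ)) ≤ rhoAux σ ^ N / Real.sqrt (2*π)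
      rw [hc1]
      calc Real.exp ((N:ℝ) * (Real.log σ + (1/σ^2 - 1)/2)) *
            (∫ t in Set.Ioi ((N:ℝ)*(1/σ^2)), t ^ ((N:ℝ)-1) * Real.exp (-t))
            / (Real.sqrt (2*π) * Real.Gamma (N:ℝ))
          ≤ Real.exp ((N:ℝ) * (Real.log σ + (1/σ^2 - 1)/2)) *
            ((1/σ^2) ^ (N:ℝ) * Real.exp (-((N:ℝ)*(1/σ^2-1))) * Real.Gamma (N:ℝ))
            / (Real.sqrt (2*π) * Real.Gamma (N:ℝ)) := by
            gcongr
        _ = rhoAux σ ^ N / Real.sqrt (2*π) := by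
            rw [show Real.exp ((N:ℝ) * (Real.log σ + (1/σ^2 - 1)/2)) *
              ((1/σ^2) ^ (N:ℝ) * Real.exp (-((N:ℝ)*(1/σ^2-1))) * Real.Gamma (N:ℝ))
              = Real.exp ((N:ℝ) * (Real.log σ + (1/σ^2 - 1)/2)) *
                ((1/σ^2) ^ (N:ℝ) * Real.exp (-((N:ℝ)*(1/σ^2-1)))) * Real.Gamma (N:ℝ) from by ring,
              hscal2 hσ0 N, mul_comm (Real.sqrt (2*π)) (Real.Gamma (N:ℝ)), ← div_div,
              mul_div_cancel_right₀ _ hGN.ne']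
  have hr : Tendsto r atTop (nhds 0) := by
    refine squeeze_zero' ?_ ?_ hρlim
    · filter_upwards [eventually_ge_atTop 1] with N hN
      have hN0 : (0:ℝ) < (N:ℝ) := by exact_mod_cast hN
      have hG2 : 0 < Real.Gamma ((N:ℝ)/2) := Real.Gamma_pos_of_pos (by positivity)
      refine div_nonneg ?_ hG2.le
      refine setIntegral_nonneg measurableSet_Ioi (fun t ht => ?_)
      have ht0 : 0 < t := lt_trans (by positivity) ht
      positivity
    · filter_upwards [eventually_ge_atTop 2] with N hN
      have hN0 : (0:ℝ) < (N:ℝ) := by exact_mod_cast (by omega : 1 ≤ N)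
      have hG2 : 0 < Real.Gamma ((N:ℝ)/2) := Real.Gamma_pos_of_pos (by positivity)
      have hNa : (1:ℝ) ≤ (N:ℝ)/2 := by
        rw [le_div_iff₀ (by norm_num)]
        exact_mod_cast hN
      have htail := tail_le hNa hx1
      have hc2 : (N:ℝ)/(2*σ^2) = ((N:ℝ)/2)*(1/σ^2) := by ring
      show (∫ t in Set.Ioi ((N:ℝ)/(2*σ^2)), t ^ ((N:ℝ)/2-1) * Real.exp (-t))
          / Real.Gamma ((N:ℝ)/2) ≤ rhoAux σ ^ N
      rw [hc2]
      calc (∫ t in Set.Ioi (((N:ℝ)/2)*(1/σ^2)), t ^ ((N:ℝ)/2-1) * Real.exp (-t))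
            / Real.Gamma ((N:ℝ)/2)
          ≤ ((1/σ^2) ^ ((N:ℝ)/2) * Real.exp (-((N:ℝ)/2*(1/σ^2-1))) * Real.Gamma ((N:ℝ)/2))
            / Real.Gamma ((N:ℝ)/2) := by gcongr
        _ = rhoAux σ ^ N := by
            rw [mul_div_cancel_right₀ _ hG2.ne', hscal3 hσ0 N]
  have hlim : Tendsto (fun N : ℕ => A N + gM N * (1 - r N)) atTop
      (nhds (0 + (1 / Real.sqrt (4*π)) * (1 - 0))) :=
    hA.add (gM_tendsto.mul (tendsto_const_nhds.sub hr))
  have hval : (0:ℝ) + (1 / Real.sqrt (4*π)) * (1 - 0) = 1 / Real.sqrt (4*π) := by norm_num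
  rw [hval] at hlim
  refine hlim.congr' ?_
  filter_upwards [eventually_ge_atTop 1] with N hN
  exact (main_eq hσ0 hN).symm
end
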